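/- For the flat distributive law Λ of the double presheaf 2-monad 𝔓𝔓† over the presheaf 2-monad 𝔓 given by Λ_X = y_{PP†X}·((y_X)_†)^!:PP†PX→P(PP†X), there is a 2-isomorphism (Λ,Q)-Alg ≅ Q-Int: lax Λ-algebra structures p:PP†X→PX on a Q-category X correspond bijectively to Q-closure operations on P†X, and lax Λ-homomorphisms correspond exactly to the continuous Q-functors between Q-interior spaces. -/
import Mathlib


/-!
Common framework: quantaloids, `Q`-categories, `Q`-functors, `Q`-distributors,
(co)presheaf constructions, 2-monads on `Q`-Cat, lax distributive laws over the
presheaf 2-monad, and lax extensions to `Q`-Dist.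
-/

set_option autoImplicit false

universe u

namespace QT

/-- A (small) quantaloid: a category enriched in complete lattices, with
composition preserving suprema in each variable. -/
structure Quantaloid : Type (u + 1) where
  Obj : Type u
  Hom : Obj → Obj → Type u
  lat : ∀ a b, CompleteLattice (Hom a b)
  comp : ∀ {a b c}, Hom b c → Hom a b → Hom a c
  idm : ∀ a, Hom a a
  comp_assoc : ∀ {a b c d} (w : Hom c d) (v : Hom b c) (u : Hom a b),
    comp (comp w v) u = comp w (comp v u)
  comp_idm : ∀ {a b} (u : Hom a b), comp u (idm a) = u
  idm_comp : ∀ {a b} (u : Hom a b), comp (idm b) u = u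
  comp_sSup : ∀ {a b c} (v : Hom b c) (S : Set (Hom a b)),
    comp v (sSup S) = ⨆ u ∈ S, comp v u
  sSup_comp : ∀ {a b c} (S : Set (Hom b c)) (u : Hom a b),
    comp (sSup S) u = ⨆ v ∈ S, comp v u

attribute [instance] Quantaloid.lat

namespace Quantaloid

variable {Q : Quantaloid.{u}}

theorem comp_iSup {a b c : Q.Obj} (v : Q.Hom b c) {ι : Sort*} (f : ι → Q.Hom a b) :
    Q.comp v (⨆ i, f i) = ⨆ i, Q.comp v (f i) := by
  rw [iSup, Q.comp_sSup, iSup_range]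

theorem iSup_comp {a b c : Q.Obj} {ι : Sort*} (f : ι → Q.Hom b c) (u : Q.Hom a b) :
    Q.comp (⨆ i, f i) u = ⨆ i, Q.comp (f i) u := by
  rw [iSup, Q.sSup_comp, iSup_range]

theorem comp_le_comp {a b c : Q.Obj} {v v' : Q.Hom b c} {u u' : Q.Hom a b}
    (hv : v ≤ v') (hu : u ≤ u') : Q.comp v u ≤ Q.comp v' u' := by
  have h1 : Q.comp v' u ≤ Q.comp v' u' := by
    have h := Q.comp_sSup v' {u, u'}
    rw [sSup_pair, sup_eq_right.mpr hu] at h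
    rw [h]
    exact le_biSup (fun x => Q.comp v' x) (Set.mem_insert _ _)
  have h2 : Q.comp v u ≤ Q.comp v' u := by
    have h := Q.sSup_comp {v, v'} u
    rw [sSup_pair, sup_eq_right.mpr hv] at h
    rw [h]
    exact le_biSup (fun x => Q.comp x u) (Set.mem_insert _ _)
  exact le_trans h2 h1

/-- Internal hom `w ↙ u` (right adjoint to `- ∘ u`). -/
def lda {a b c : Q.Obj} (w : Q.Hom a c) (u : Q.Hom a b) : Q.Hom b c :=
  sSup {v | Q.comp v u ≤ w}

/-- Internal hom `v ↘ w` (right adjoint to `v ∘ -`). -/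
def rda {a b c : Q.Obj} (v : Q.Hom b c) (w : Q.Hom a c) : Q.Hom a b :=
  sSup {u | Q.comp v u ≤ w}

theorem le_lda {a b c : Q.Obj} {v : Q.Hom b c} {u : Q.Hom a b} {w : Q.Hom a c} :
    Q.comp v u ≤ w ↔ v ≤ lda w u := by
  constructor
  · exact fun h => le_sSup h
  · intro h
    calc Q.comp v u ≤ Q.comp (lda w u) u := comp_le_comp h le_rfl
      _ ≤ w := by
          rw [lda, Q.sSup_comp]; exact iSup₂_le fun v' hv' => hv'

theorem le_rda {a b c : Q.Obj} {v : Q.Hom b c} {u : Q.Hom a b} {w : Q.Hom a c} :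
    Q.comp v u ≤ w ↔ u ≤ rda v w := by
  constructor
  · exact fun h => le_sSup h
  · intro h
    calc Q.comp v u ≤ Q.comp v (rda v w) := comp_le_comp le_rfl h
      _ ≤ w := by
          rw [rda, Q.comp_sSup]; exact iSup₂_le fun u' hu' => hu'

end Quantaloid

variable {Q : Quantaloid.{u}}

/-- `Q`-relations between families of sets indexed by the objects of `Q`
(i.e. sets over `ob Q`, presented fibrewise). -/
abbrev QRel (Q : Quantaloid.{u}) (X Y : Q.Obj → Type u) : Type u :=
  ∀ p q, X p → Y q → Q.Hom p q

/-- Composition of `Q`-relations. -/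
def QRel.comp {X Y Z : Q.Obj → Type u} (ψ : QRel Q Y Z) (φ : QRel Q X Y) : QRel Q X Z :=
  fun p r x z => ⨆ q, ⨆ y : Y q, Q.comp (ψ q r y z) (φ p q x y)

theorem QRel.comp_mono {X Y Z : Q.Obj → Type u} {ψ ψ' : QRel Q Y Z} {φ φ' : QRel Q X Y}
    (h1 : ψ ≤ ψ') (h2 : φ ≤ φ') : QRel.comp ψ φ ≤ QRel.comp ψ' φ' := by
  intro p r x z
  exact iSup_mono fun q => iSup_mono fun y =>
    Quantaloid.comp_le_comp (h1 q r y z) (h2 p q x y)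

theorem QRel.comp_assoc {W X Y Z : Q.Obj → Type u}
    (χ : QRel Q Y Z) (ψ : QRel Q X Y) (φ : QRel Q W X) :
    QRel.comp (QRel.comp χ ψ) φ = QRel.comp χ (QRel.comp ψ φ) := by
  funext p s w z
  simp only [QRel.comp, Quantaloid.iSup_comp, Quantaloid.comp_iSup]
  apply le_antisymm
  · exact iSup₂_le fun q x => iSup₂_le fun r y =>
      le_iSup_of_le r (le_iSup_of_le y (le_iSup_of_le q (le_iSup_of_le x
        (Q.comp_assoc _ _ _).le)))
  · exact iSup₂_le fun r y => iSup₂_le fun q x =>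
      le_iSup_of_le q (le_iSup_of_le x (le_iSup_of_le r (le_iSup_of_le y
        (Q.comp_assoc _ _ _).ge)))

/-- A (small) `Q`-category. -/
structure QCat (Q : Quantaloid.{u}) : Type (u + 1) where
  el : Q.Obj → Type u
  hom : QRel Q el el
  refl : ∀ p (x : el p), Q.idm p ≤ hom p p x x
  trans : QRel.comp hom hom ≤ hom

/-- Pointwise transitivity in a `Q`-category. -/
theorem QCat.hom_comp_le (X : QCat Q) {p q r : Q.Obj}
    (x : X.el p) (y : X.el q) (z : X.el r) :
    Q.comp (X.hom q r y z) (X.hom p q x y) ≤ X.hom p r x z :=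
  le_trans
    (le_iSup_of_le q (le_iSup (fun y' : X.el q => Q.comp (X.hom q r y' z) (X.hom p q x y')) y))
    (X.trans p r x z)

/-- Any `Q`-relation into a `Q`-category embeds into its post-composite with the hom. -/
theorem QRel.le_hom_comp {W : Q.Obj → Type u} {Z : QCat Q} (ρ : QRel Q W Z.el) :
    ρ ≤ QRel.comp Z.hom ρ := by
  intro p q x z
  calc ρ p q x z = Q.comp (Q.idm q) (ρ p q x z) := (Q.idm_comp _).symm
    _ ≤ Q.comp (Z.hom q q z z) (ρ p q x z) := Quantaloid.comp_le_comp (Z.refl q z) le_rfl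
    _ ≤ _ := le_iSup_of_le q
        (le_iSup (fun z' : Z.el q => Q.comp (Z.hom q q z' z) (ρ p q x z')) z)

/-- Any `Q`-relation out of a `Q`-category embeds into its pre-composite with the hom. -/
theorem QRel.le_comp_hom {X : QCat Q} {W : Q.Obj → Type u} (ρ : QRel Q X.el W) :
    ρ ≤ QRel.comp ρ X.hom := by
  intro p q x z
  calc ρ p q x z = Q.comp (ρ p q x z) (Q.idm p) := (Q.comp_idm _).symm
    _ ≤ Q.comp (ρ p q x z) (X.hom p p x x) := Quantaloid.comp_le_comp le_rfl (X.refl p x)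
    _ ≤ _ := le_iSup_of_le p
        (le_iSup (fun x' : X.el p => Q.comp (ρ p q x' z) (X.hom p p x x')) x)

/-- A `Q`-functor. -/
structure QFun (X Y : QCat Q) : Type u where
  app : ∀ p, X.el p → Y.el p
  mono : ∀ p q (x : X.el p) (x' : X.el q),
    X.hom p q x x' ≤ Y.hom p q (app p x) (app q x')

def QFun.id (X : QCat Q) : QFun X X :=
  ⟨fun _ x => x, fun _ _ _ _ => le_rfl⟩

def QFun.comp {X Y Z : QCat Q} (g : QFun Y Z) (f : QFun X Y) : QFun X Z :=
  ⟨fun p x => g.app p (f.app p x),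
   fun p q x x' => le_trans (f.mono p q x x') (g.mono p q (f.app p x) (f.app q x'))⟩

/-- The (pointwise) order of `Q`-functors. -/
instance {X Y : QCat Q} : Preorder (QFun X Y) where
  le f g := ∀ p (x : X.el p), Q.idm p ≤ Y.hom p p (f.app p x) (g.app p x)
  le_refl f p x := Y.refl p (f.app p x)
  le_trans f g h h1 h2 := by
    intro p x
    calc Q.idm p = Q.comp (Q.idm p) (Q.idm p) := (Q.comp_idm _).symm
      _ ≤ Q.comp (Y.hom p p (g.app p x) (h.app p x)) (Y.hom p p (f.app p x) (g.app p x)) :=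
          Quantaloid.comp_le_comp (h2 p x) (h1 p x)
      _ ≤ Y.hom p p (f.app p x) (h.app p x) := Y.hom_comp_le _ _ _

/-- A `Q`-distributor between `Q`-categories. -/
structure QDist (X Y : QCat Q) : Type u where
  rel : QRel Q X.el Y.el
  compat : QRel.comp Y.hom (QRel.comp rel X.hom) ≤ rel

instance {X Y : QCat Q} : PartialOrder (QDist X Y) where
  le φ ψ := φ.rel ≤ ψ.rel
  le_refl φ := le_refl φ.rel
  le_trans _ _ _ h h' := by
    intro p q x y
    exact le_trans (h p q x y) (h' p q x y)
  le_antisymm φ ψ h h' := by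
    have hr : φ.rel = ψ.rel := le_antisymm h h'
    cases φ; cases ψ; cases hr; rfl

theorem QDist.hom_comp_le {X Y : QCat Q} (φ : QDist X Y) :
    QRel.comp Y.hom φ.rel ≤ φ.rel :=
  le_trans (QRel.comp_mono le_rfl (QRel.le_comp_hom φ.rel)) φ.compat

theorem QDist.comp_hom_le {X Y : QCat Q} (φ : QDist X Y) :
    QRel.comp φ.rel X.hom ≤ φ.rel :=
  le_trans (QRel.le_hom_comp _) φ.compat

theorem QDist.rel_comp_hom {X Y : QCat Q} (φ : QDist X Y) {p q r : Q.Obj}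
    (x : X.el p) (x' : X.el q) (y : Y.el r) :
    Q.comp (φ.rel q r x' y) (X.hom p q x x') ≤ φ.rel p r x y :=
  le_trans
    (le_iSup_of_le q (le_iSup (fun x'' : X.el q => Q.comp (φ.rel q r x'' y) (X.hom p q x x'')) x'))
    (φ.comp_hom_le p r x y)

theorem QDist.hom_comp_rel {X Y : QCat Q} (φ : QDist X Y) {p q r : Q.Obj}
    (x : X.el p) (y : Y.el q) (y' : Y.el r) :
    Q.comp (Y.hom q r y y') (φ.rel p q x y) ≤ φ.rel p r x y' :=
  le_trans
    (le_iSup_of_le q (le_iSup (fun y'' : Y.el q => Q.comp (Y.hom q r y'' y') (φ.rel p q x y'')) y))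
    (φ.hom_comp_le p r x y')

/-- Composition of `Q`-distributors. -/
def QDist.comp {X Y Z : QCat Q} (ψ : QDist Y Z) (φ : QDist X Y) : QDist X Z :=
  ⟨QRel.comp ψ.rel φ.rel, by
    calc QRel.comp Z.hom (QRel.comp (QRel.comp ψ.rel φ.rel) X.hom)
        = QRel.comp (QRel.comp Z.hom ψ.rel) (QRel.comp φ.rel X.hom) := by
          rw [QRel.comp_assoc, QRel.comp_assoc]
      _ ≤ QRel.comp ψ.rel φ.rel :=
          QRel.comp_mono ψ.hom_comp_le φ.comp_hom_le⟩

/-- The identity distributor `1_X^*` on a `Q`-category. -/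
def QCat.homDist (X : QCat Q) : QDist X X :=
  ⟨X.hom, le_trans (QRel.comp_mono le_rfl X.trans) X.trans⟩

/-- The graph `f_*` of a `Q`-functor. -/
def QFun.graph {X Y : QCat Q} (f : QFun X Y) : QDist X Y :=
  ⟨fun p q x y => Y.hom p q (f.app p x) y, by
    intro p q x y
    simp only [QRel.comp, Quantaloid.comp_iSup, Quantaloid.iSup_comp]
    refine iSup₂_le fun q' y' => iSup₂_le fun p' x' => ?_
    calc Q.comp (Y.hom q' q y' y) (Q.comp (Y.hom p' q' (f.app p' x') y') (X.hom p p' x x'))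
        ≤ Q.comp (Y.hom q' q y' y)
            (Q.comp (Y.hom p' q' (f.app p' x') y') (Y.hom p p' (f.app p x) (f.app p' x'))) :=
          Quantaloid.comp_le_comp le_rfl
            (Quantaloid.comp_le_comp le_rfl (f.mono p p' x x'))
      _ ≤ Q.comp (Y.hom q' q y' y) (Y.hom p q' (f.app p x) y') :=
          Quantaloid.comp_le_comp le_rfl (Y.hom_comp_le _ _ _)
      _ ≤ Y.hom p q (f.app p x) y := Y.hom_comp_le _ _ _⟩

/-- The cograph `f^*` of a `Q`-functor. -/
def QFun.cograph {X Y : QCat Q} (f : QFun X Y) : QDist Y X :=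
  ⟨fun p q y x => Y.hom p q y (f.app q x), by
    intro p q y x
    simp only [QRel.comp, Quantaloid.comp_iSup, Quantaloid.iSup_comp]
    refine iSup₂_le fun q' x' => iSup₂_le fun p' y' => ?_
    calc Q.comp (X.hom q' q x' x) (Q.comp (Y.hom p' q' y' (f.app q' x')) (Y.hom p p' y y'))
        ≤ Q.comp (Y.hom q' q (f.app q' x') (f.app q x))
            (Q.comp (Y.hom p' q' y' (f.app q' x')) (Y.hom p p' y y')) :=
          Quantaloid.comp_le_comp (f.mono q' q x' x) le_rfl
      _ ≤ Q.comp (Y.hom q' q (f.app q' x') (f.app q x)) (Y.hom p q' y (f.app q' x')) :=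
          Quantaloid.comp_le_comp le_rfl (Y.hom_comp_le _ _ _)
      _ ≤ Y.hom p q y (f.app q x) := Y.hom_comp_le _ _ _⟩

/-- The presheaf `Q`-category `P X`. -/
def QCat.P (X : QCat Q) : QCat Q where
  el s := { σ : ∀ p, X.el p → Q.Hom p s //
    ∀ p q (x : X.el p) (x' : X.el q), Q.comp (σ q x') (X.hom p q x x') ≤ σ p x }
  hom s s' σ σ' := ⨅ p, ⨅ x : X.el p, Quantaloid.lda (σ'.1 p x) (σ.1 p x)
  refl := by
    intro s σ
    refine le_iInf fun p => le_iInf fun x => Quantaloid.le_lda.mp ?_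
    rw [Q.idm_comp]
  trans := by
    intro s s'' σ σ''
    refine iSup₂_le fun s' σ' => ?_
    refine le_iInf fun p => le_iInf fun x => Quantaloid.le_lda.mp ?_
    rw [Q.comp_assoc]
    have h1 : Q.comp (⨅ p', ⨅ x' : X.el p', Quantaloid.lda (σ'.1 p' x') (σ.1 p' x'))
        (σ.1 p x) ≤ σ'.1 p x :=
      Quantaloid.le_lda.mpr (le_trans (iInf_le _ p) (iInf_le _ x))
    have h2 : Q.comp (⨅ p', ⨅ x' : X.el p', Quantaloid.lda (σ''.1 p' x') (σ'.1 p' x'))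
        (σ'.1 p x) ≤ σ''.1 p x :=
      Quantaloid.le_lda.mpr (le_trans (iInf_le _ p) (iInf_le _ x))
    exact le_trans (Quantaloid.comp_le_comp le_rfl h1) h2

/-- The copresheaf `Q`-category `P† X`. -/
def QCat.Pd (X : QCat Q) : QCat Q where
  el s := { τ : ∀ q, X.el q → Q.Hom s q //
    ∀ p q (x : X.el p) (x' : X.el q), Q.comp (X.hom p q x x') (τ p x) ≤ τ q x' }
  hom s s' τ τ' := ⨅ q, ⨅ x : X.el q, Quantaloid.rda (τ'.1 q x) (τ.1 q x)
  refl := by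
    intro s τ
    refine le_iInf fun q => le_iInf fun x => Quantaloid.le_rda.mp ?_
    rw [Q.comp_idm]
  trans := by
    intro s s'' τ τ''
    refine iSup₂_le fun s' τ' => ?_
    refine le_iInf fun q => le_iInf fun x => Quantaloid.le_rda.mp ?_
    rw [← Q.comp_assoc]
    have h1 : Q.comp (τ''.1 q x)
        (⨅ q', ⨅ x' : X.el q', Quantaloid.rda (τ''.1 q' x') (τ'.1 q' x')) ≤ τ'.1 q x :=
      Quantaloid.le_rda.mpr (le_trans (iInf_le _ q) (iInf_le _ x))
    have h2 : Q.comp (τ'.1 q x)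
        (⨅ q', ⨅ x' : X.el q', Quantaloid.rda (τ'.1 q' x') (τ.1 q' x')) ≤ τ.1 q x :=
      Quantaloid.le_rda.mpr (le_trans (iInf_le _ q) (iInf_le _ x))
    exact le_trans (Quantaloid.comp_le_comp h1 le_rfl) h2

/-- The Yoneda embedding `y_X : X → P X`. -/
def QCat.y (X : QCat Q) : QFun X X.P where
  app p x := ⟨fun q x' => X.hom q p x' x,
    fun p' q' x1 x2 => X.hom_comp_le x1 x2 x⟩
  mono := by
    intro p q x x'
    refine le_iInf fun r => le_iInf fun x'' => Quantaloid.le_lda.mp ?_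
    exact X.hom_comp_le x'' x x'

/-- The co-Yoneda embedding `y†_X : X → P† X`. -/
def QCat.yd (X : QCat Q) : QFun X X.Pd where
  app p x := ⟨fun q x' => X.hom p q x x',
    fun p' q' x1 x2 => X.hom_comp_le x x1 x2⟩
  mono := by
    intro p q x x'
    refine le_iInf fun r => le_iInf fun x'' => Quantaloid.le_rda.mp ?_
    exact X.hom_comp_le x x' x''

/-- `φ^→ : P Y → P X`, `τ ↦ τ ∘ φ`. -/
def QDist.fwd {X Y : QCat Q} (φ : QDist X Y) : QFun Y.P X.P where
  app s τ := ⟨fun p x => ⨆ q, ⨆ y : Y.el q, Q.comp (τ.1 q y) (φ.rel p q x y), by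
    intro p q x x'
    rw [Quantaloid.iSup_comp]
    refine iSup_le fun r => ?_
    rw [Quantaloid.iSup_comp]
    refine iSup_le fun y => ?_
    rw [Q.comp_assoc]
    exact le_iSup_of_le r (le_iSup_of_le y
      (Quantaloid.comp_le_comp le_rfl (φ.rel_comp_hom x x' y)))⟩
  mono := by
    intro s s' τ τ'
    refine le_iInf fun p => le_iInf fun x => Quantaloid.le_lda.mp ?_
    rw [Quantaloid.comp_iSup]
    refine iSup_le fun r => ?_
    rw [Quantaloid.comp_iSup]
    refine iSup_le fun y => ?_
    rw [← Q.comp_assoc]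
    have h : Q.comp (Y.P.hom s s' τ τ') (τ.1 r y) ≤ τ'.1 r y :=
      Quantaloid.le_lda.mpr (le_trans (iInf_le _ r) (iInf_le _ y))
    exact le_iSup_of_le r (le_iSup_of_le y (Quantaloid.comp_le_comp h le_rfl))

/-- `φ^↞ : P† X → P† Y`, `σ ↦ φ ∘ σ`. -/
def QDist.bwd {X Y : QCat Q} (φ : QDist X Y) : QFun X.Pd Y.Pd where
  app s σ := ⟨fun q y => ⨆ p, ⨆ x : X.el p, Q.comp (φ.rel p q x y) (σ.1 p x), by
    intro p q y y'
    rw [Quantaloid.comp_iSup]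
    refine iSup_le fun r => ?_
    rw [Quantaloid.comp_iSup]
    refine iSup_le fun x => ?_
    rw [← Q.comp_assoc]
    exact le_iSup_of_le r (le_iSup_of_le x
      (Quantaloid.comp_le_comp (φ.hom_comp_rel x y y') le_rfl))⟩
  mono := by
    intro s s' σ σ'
    refine le_iInf fun q => le_iInf fun y => Quantaloid.le_rda.mp ?_
    rw [Quantaloid.iSup_comp]
    refine iSup_le fun r => ?_
    rw [Quantaloid.iSup_comp]
    refine iSup_le fun x => ?_
    rw [Q.comp_assoc]
    have h : Q.comp (σ'.1 r x) (X.Pd.hom s s' σ σ') ≤ σ.1 r x :=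
      Quantaloid.le_rda.mpr (le_trans (iInf_le _ r) (iInf_le _ x))
    exact le_iSup_of_le r (le_iSup_of_le x (Quantaloid.comp_le_comp le_rfl h))

/-- `φ_→ : P X → P Y`, `σ ↦ σ ↙ φ`. -/
def QDist.fwdr {X Y : QCat Q} (φ : QDist X Y) : QFun X.P Y.P where
  app s σ := ⟨fun q y => ⨅ p, ⨅ x : X.el p, Quantaloid.lda (σ.1 p x) (φ.rel p q x y), by
    intro q q' y y'
    refine le_iInf fun p => le_iInf fun x => Quantaloid.le_lda.mp ?_
    rw [Q.comp_assoc]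
    have h1 : Q.comp (Y.hom q q' y y') (φ.rel p q x y) ≤ φ.rel p q' x y' :=
      φ.hom_comp_rel x y y'
    have h2 : Q.comp ((⨅ p', ⨅ x' : X.el p',
        Quantaloid.lda (σ.1 p' x') (φ.rel p' q' x' y')) : Q.Hom q' s) (φ.rel p q' x y')
        ≤ σ.1 p x :=
      Quantaloid.le_lda.mpr (le_trans (iInf_le _ p) (iInf_le _ x))
    exact le_trans (Quantaloid.comp_le_comp le_rfl h1) h2⟩
  mono := by
    intro s s' σ σ'
    refine le_iInf fun q => le_iInf fun y => Quantaloid.le_lda.mp ?_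
    refine le_iInf fun p => le_iInf fun x => Quantaloid.le_lda.mp ?_
    rw [Q.comp_assoc]
    have h1 : Q.comp ((⨅ p', ⨅ x' : X.el p',
        Quantaloid.lda (σ.1 p' x') (φ.rel p' q x' y)) : Q.Hom q s) (φ.rel p q x y)
        ≤ σ.1 p x :=
      Quantaloid.le_lda.mpr (le_trans (iInf_le _ p) (iInf_le _ x))
    have h2 : Q.comp (X.P.hom s s' σ σ') (σ.1 p x) ≤ σ'.1 p x :=
      Quantaloid.le_lda.mpr (le_trans (iInf_le _ p) (iInf_le _ x))
    exact le_trans (Quantaloid.comp_le_comp le_rfl h1) h2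

/-- Isbell `φ↑ : P X → P† Y`, `σ ↦ φ ↙ σ`. -/
def QDist.up {X Y : QCat Q} (φ : QDist X Y) : QFun X.P Y.Pd where
  app s σ := ⟨fun q y => ⨅ p, ⨅ x : X.el p, Quantaloid.lda (φ.rel p q x y) (σ.1 p x), by
    intro q q' y y'
    refine le_iInf fun p => le_iInf fun x => Quantaloid.le_lda.mp ?_
    rw [Q.comp_assoc]
    have h1 : Q.comp ((⨅ p', ⨅ x' : X.el p',
        Quantaloid.lda (φ.rel p' q x' y) (σ.1 p' x')) : Q.Hom s q) (σ.1 p x)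
        ≤ φ.rel p q x y :=
      Quantaloid.le_lda.mpr (le_trans (iInf_le _ p) (iInf_le _ x))
    exact le_trans (Quantaloid.comp_le_comp le_rfl h1) (φ.hom_comp_rel x y y')⟩
  mono := by
    intro s s' σ σ'
    refine le_iInf fun q => le_iInf fun y => Quantaloid.le_rda.mp ?_
    refine le_iInf fun p => le_iInf fun x => Quantaloid.le_lda.mp ?_
    rw [Q.comp_assoc]
    have h1 : Q.comp (X.P.hom s s' σ σ') (σ.1 p x) ≤ σ'.1 p x :=
      Quantaloid.le_lda.mpr (le_trans (iInf_le _ p) (iInf_le _ x))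
    have h2 : Q.comp ((⨅ p', ⨅ x' : X.el p',
        Quantaloid.lda (φ.rel p' q x' y) (σ'.1 p' x')) : Q.Hom s' q) (σ'.1 p x)
        ≤ φ.rel p q x y :=
      Quantaloid.le_lda.mpr (le_trans (iInf_le _ p) (iInf_le _ x))
    exact le_trans (Quantaloid.comp_le_comp le_rfl h1) h2

/-- Isbell `φ↓ : P† Y → P X`, `τ ↦ τ ↘ φ`. -/
def QDist.down {X Y : QCat Q} (φ : QDist X Y) : QFun Y.Pd X.P where
  app s τ := ⟨fun p x => ⨅ q, ⨅ y : Y.el q, Quantaloid.rda (τ.1 q y) (φ.rel p q x y), by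
    intro p p' x x'
    refine le_iInf fun q => le_iInf fun y => Quantaloid.le_rda.mp ?_
    rw [← Q.comp_assoc]
    have h1 : Q.comp (τ.1 q y) ((⨅ q', ⨅ y' : Y.el q',
        Quantaloid.rda (τ.1 q' y') (φ.rel p' q' x' y')) : Q.Hom p' s)
        ≤ φ.rel p' q x' y :=
      Quantaloid.le_rda.mpr (le_trans (iInf_le _ q) (iInf_le _ y))
    exact le_trans (Quantaloid.comp_le_comp h1 le_rfl) (φ.rel_comp_hom x x' y)⟩
  mono := by
    intro s s' τ τ'
    refine le_iInf fun p => le_iInf fun x => Quantaloid.le_lda.mp ?_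
    refine le_iInf fun q => le_iInf fun y => Quantaloid.le_rda.mp ?_
    rw [← Q.comp_assoc]
    have h1 : Q.comp (τ'.1 q y) (Y.Pd.hom s s' τ τ') ≤ τ.1 q y :=
      Quantaloid.le_rda.mpr (le_trans (iInf_le _ q) (iInf_le _ y))
    have h2 : Q.comp (τ.1 q y) ((⨅ q', ⨅ y' : Y.el q',
        Quantaloid.rda (τ.1 q' y') (φ.rel p q' x y')) : Q.Hom p s)
        ≤ φ.rel p q x y :=
      Quantaloid.le_rda.mpr (le_trans (iInf_le _ q) (iInf_le _ y))
    exact le_trans (Quantaloid.comp_le_comp h1 le_rfl) h2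

/-- The transpose `←φ : Y → P X` of a distributor `φ : X ⇸ Y`. -/
def QDist.transpose {X Y : QCat Q} (φ : QDist X Y) : QFun Y X.P where
  app q y := ⟨fun p x => φ.rel p q x y,
    fun p q' x x' => φ.rel_comp_hom x x' y⟩
  mono := by
    intro q q' y y'
    refine le_iInf fun p => le_iInf fun x => Quantaloid.le_lda.mp ?_
    exact φ.hom_comp_rel x y y'

/-- The inverse of transposition. -/
def QFun.untranspose {X Y : QCat Q} (g : QFun Y X.P) : QDist X Y :=
  ⟨fun p q x y => (g.app q y).1 p x, by
    intro p q x y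
    simp only [QRel.comp, Quantaloid.comp_iSup, Quantaloid.iSup_comp]
    refine iSup₂_le fun q' y' => iSup₂_le fun p' x' => ?_
    have h1 : Q.comp ((g.app q' y').1 p' x') (X.hom p p' x x') ≤ (g.app q' y').1 p x :=
      (g.app q' y').2 p p' x x'
    have h2 : Q.comp (Y.hom q' q y' y) ((g.app q' y').1 p x) ≤ (g.app q y).1 p x :=
      Quantaloid.le_lda.mpr
        (le_trans (g.mono q' q y' y) (le_trans (iInf_le _ p) (iInf_le _ x)))
    exact le_trans (Quantaloid.comp_le_comp le_rfl h1) h2⟩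

/-- `f_! := (f^*)^→ : P X → P Y`. -/
def pshf {X Y : QCat Q} (f : QFun X Y) : QFun X.P Y.P := f.cograph.fwd

/-- `f^! := (f_*)^→ : P Y → P X`. -/
def pshb {X Y : QCat Q} (f : QFun X Y) : QFun Y.P X.P := f.graph.fwd

/-- `f_† := (f_*)^↞ : P† X → P† Y`. -/
def cpsf {X Y : QCat Q} (f : QFun X Y) : QFun X.Pd Y.Pd := f.graph.bwd

/-- `f^† := (f^*)^↞ : P† Y → P† X`. -/
def cpsb {X Y : QCat Q} (f : QFun X Y) : QFun Y.Pd X.Pd := f.cograph.bwd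

/-- `sup_{P X} = y_X^! : P P X → P X`: the multiplication of the presheaf 2-monad. -/
def supP (X : QCat Q) : QFun X.P.P X.P := pshb X.y

/-- `inf_{P† X} = (y†_X)^† : P† P† X → P† X`: the multiplication of the copresheaf
2-monad. -/
def infPd (X : QCat Q) : QFun X.Pd.Pd X.Pd := cpsb X.yd

/-- Adjunction `f ⊣ g` in `Q`-Cat. -/
def QAdj {X Y : QCat Q} (f : QFun X Y) (g : QFun Y X) : Prop :=
  QFun.id X ≤ g.comp f ∧ f.comp g ≤ QFun.id Y

/-- Fully faithful `Q`-functors. -/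
def QFun.FullyFaithful {X Y : QCat Q} (f : QFun X Y) : Prop :=
  ∀ p q (x : X.el p) (x' : X.el q), X.hom p q x x' = Y.hom p q (f.app p x) (f.app q x')

/-- A `Q`-closure operation on a `Q`-category. -/
def IsClosureOp (Z : QCat Q) (c : QFun Z Z) : Prop :=
  QFun.id Z ≤ c ∧ c.comp c = c

/-- A 2-functor on `Q`-Cat. -/
structure TwoFunctor (Q : Quantaloid.{u}) : Type (u + 1) where
  obj : QCat Q → QCat Q
  map : ∀ {X Y : QCat Q}, QFun X Y → QFun (obj X) (obj Y)
  map_id : ∀ X : QCat Q, map (QFun.id X) = QFun.id (obj X)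
  map_comp : ∀ {X Y Z : QCat Q} (g : QFun Y Z) (f : QFun X Y),
    map (g.comp f) = (map g).comp (map f)
  map_mono : ∀ {X Y : QCat Q} {f g : QFun X Y}, f ≤ g → map f ≤ map g

/-- A 2-monad on `Q`-Cat. -/
structure TwoMonad (Q : Quantaloid.{u}) extends TwoFunctor Q where
  unit : ∀ X : QCat Q, QFun X (obj X)
  mult : ∀ X : QCat Q, QFun (obj (obj X)) (obj X)
  unit_nat : ∀ {X Y : QCat Q} (f : QFun X Y), (unit Y).comp f = (map f).comp (unit X)
  mult_nat : ∀ {X Y : QCat Q} (f : QFun X Y),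
    (mult Y).comp (map (map f)) = (map f).comp (mult X)
  mult_unit : ∀ X : QCat Q, (mult X).comp (unit (obj X)) = QFun.id (obj X)
  mult_map_unit : ∀ X : QCat Q, (mult X).comp (map (unit X)) = QFun.id (obj X)
  mult_assoc : ∀ X : QCat Q, (mult X).comp (map (mult X)) = (mult X).comp (mult (obj X))

/-- The type of families `λ_X : T P X → P T X`. -/
abbrev LamFamily (T : TwoFunctor Q) : Type (u + 1) :=
  ∀ X : QCat Q, QFun (T.obj X.P) ((T.obj X).P)

/-- Lax naturality law (a): `(Tf)_! ∘ λ_X ≤ λ_Y ∘ T(f_!)`. -/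
def LawA (T : TwoFunctor Q) (lam : LamFamily T) : Prop :=
  ∀ (X Y : QCat Q) (f : QFun X Y),
    (pshf (T.map f)).comp (lam X) ≤ (lam Y).comp (T.map (pshf f))

/-- Lax `P`-unit law (b): `y_{TX} ≤ λ_X ∘ T y_X`. -/
def LawB (T : TwoFunctor Q) (lam : LamFamily T) : Prop :=
  ∀ X : QCat Q, QCat.y (T.obj X) ≤ (lam X).comp (T.map X.y)

/-- The `P`-unit law (b) holding strictly (flatness). -/
def LawBstrict (T : TwoFunctor Q) (lam : LamFamily T) : Prop :=
  ∀ X : QCat Q, (lam X).comp (T.map X.y) = QCat.y (T.obj X)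

/-- Lax `P`-multiplication law (c): `s_{TX} ∘ (λ_X)_! ∘ λ_{PX} ≤ λ_X ∘ T s_X`. -/
def LawC (T : TwoFunctor Q) (lam : LamFamily T) : Prop :=
  ∀ X : QCat Q,
    (supP (T.obj X)).comp ((pshf (lam X)).comp (lam X.P)) ≤ (lam X).comp (T.map (supP X))

/-- Lax `T`-unit law (d): `(e_X)_! ≤ λ_X ∘ e_{PX}`. -/
def LawD (M : TwoMonad Q) (lam : LamFamily M.toTwoFunctor) : Prop :=
  ∀ X : QCat Q, pshf (M.unit X) ≤ (lam X).comp (M.unit X.P)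

/-- Lax `T`-multiplication law (e): `(m_X)_! ∘ λ_{TX} ∘ T λ_X ≤ λ_X ∘ m_{PX}`. -/
def LawE (M : TwoMonad Q) (lam : LamFamily M.toTwoFunctor) : Prop :=
  ∀ X : QCat Q,
    (pshf (M.mult X)).comp ((lam (M.obj X)).comp (M.map (lam X))) ≤ (lam X).comp (M.mult X.P)

def IsDistLawABC (T : TwoFunctor Q) (lam : LamFamily T) : Prop :=
  LawA T lam ∧ LawB T lam ∧ LawC T lam

/-- A (lax) distributive law of the 2-monad `M` over the presheaf 2-monad. -/
def IsDistLaw (M : TwoMonad Q) (lam : LamFamily M.toTwoFunctor) : Prop :=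
  IsDistLawABC M.toTwoFunctor lam ∧ LawD M lam ∧ LawE M lam

/-- A flat distributive law: (b) holds strictly. -/
def IsFlatDistLaw (M : TwoMonad Q) (lam : LamFamily M.toTwoFunctor) : Prop :=
  IsDistLaw M lam ∧ LawBstrict M.toTwoFunctor lam

/-- Lax `λ`-algebra: laws (f) and (g). -/
def IsLaxAlg (M : TwoMonad Q) (lam : LamFamily M.toTwoFunctor) (X : QCat Q)
    (p : QFun (M.obj X) X.P) : Prop :=
  X.y ≤ p.comp (M.unit X) ∧
  (supP X).comp ((pshf p).comp ((lam X).comp (M.map p))) ≤ p.comp (M.mult X)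

/-- Lax `λ`-homomorphism: law (h). -/
def IsLaxHom (M : TwoMonad Q) {X Y : QCat Q}
    (p : QFun (M.obj X) X.P) (q : QFun (M.obj Y) Y.P) (f : QFun X Y) : Prop :=
  (pshf f).comp p ≤ q.comp (M.map f)

/-- The type of families `T̂φ : TX ⇸ TY`, one for each `φ : X ⇸ Y`. -/
abbrev ExtFamily (T : TwoFunctor Q) : Type (u + 1) :=
  ∀ ⦃X Y : QCat Q⦄, QDist X Y → QDist (T.obj X) (T.obj Y)

/-- A lax extension of the 2-functor `T` to `Q`-Dist: conditions (1), (2), (3). -/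
def IsLaxExt (T : TwoFunctor Q) (ext : ExtFamily T) : Prop :=
  (∀ (X Y : QCat Q) (φ φ' : QDist X Y), φ ≤ φ' → ext φ ≤ ext φ') ∧
  (∀ (X Y Z : QCat Q) (φ : QDist X Y) (ψ : QDist Y Z), (ext ψ).comp (ext φ) ≤ ext (ψ.comp φ)) ∧
  (∀ (X Y : QCat Q) (f : QFun X Y),
    (T.map f).graph ≤ ext f.graph ∧ (T.map f).cograph ≤ ext f.cograph)

/-- Condition (4): `φ ∘ e_X^* ≤ e_Y^* ∘ T̂φ`. -/
def ExtLaw4 (M : TwoMonad Q) (ext : ExtFamily M.toTwoFunctor) : Prop :=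
  ∀ (X Y : QCat Q) (φ : QDist X Y),
    φ.comp (M.unit X).cograph ≤ ((M.unit Y).cograph).comp (ext φ)

/-- Condition (5): `T̂T̂φ ∘ m_X^* ≤ m_Y^* ∘ T̂φ`. -/
def ExtLaw5 (M : TwoMonad Q) (ext : ExtFamily M.toTwoFunctor) : Prop :=
  ∀ (X Y : QCat Q) (φ : QDist X Y),
    (ext (ext φ)).comp (M.mult X).cograph ≤ ((M.mult Y).cograph).comp (ext φ)

/-- A lax extension of the 2-monad `M` to `Q`-Dist. -/
def IsMonadLaxExt (M : TwoMonad Q) (ext : ExtFamily M.toTwoFunctor) : Prop :=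
  IsLaxExt M.toTwoFunctor ext ∧ ExtLaw4 M ext ∧ ExtLaw5 M ext

/-- Flatness of a lax extension: `T̂ 1_X^* = 1_{TX}^*`. -/
def FlatExt (T : TwoFunctor Q) (ext : ExtFamily T) : Prop :=
  ∀ X : QCat Q, ext X.homDist = (T.obj X).homDist

/-- From a lax distributive law to a lax extension: `←(T̂φ) = λ_X ∘ T(←φ)`. -/
def PhiExt (T : TwoFunctor Q) (lam : LamFamily T) : ExtFamily T :=
  fun X Y φ => QFun.untranspose ((lam X).comp (T.map φ.transpose))

/-- From a lax extension to a lax distributive law: `λ_X = ←(T̂((y_X)_*))`. -/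
def PsiLam (T : TwoFunctor Q) (ext : ExtFamily T) : LamFamily T :=
  fun X => (ext X.y.graph).transpose

/-- The canonical lax extension `T̂φ = (T ←φ)^* ∘ (T y_X)_*`. -/
def hatExt (T : TwoFunctor Q) : ExtFamily T :=
  fun X Y φ => ((T.map φ.transpose).cograph).comp (T.map X.y).graph

/-- `λ_X = y_{PX} ∘ sup_{PX}`: the flat distributive law of `P` over itself. -/
def lamP (X : QCat Q) : QFun X.P.P X.P.P := (QCat.y X.P).comp (supP X)

/-- `λ†_X = ((y_X)_†)^! ∘ y_{P†PX}`: the strict distributive law of `P†` over `P`. -/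
def lamd (X : QCat Q) : QFun X.P.Pd X.Pd.P := (pshb (cpsf X.y)).comp (QCat.y X.P.Pd)

/-- `Λ_X = y_{PP†X} ∘ ((y_X)_†)^!`: the flat distributive law of `P P†` over `P`. -/
def LamPPd (X : QCat Q) : QFun X.P.Pd.P X.Pd.P.P := (QCat.y X.Pd.P).comp (pshb (cpsf X.y))

/-- The multiplication `S_X = s_{P†X} ∘ (y†_{PP†X})^!` of the double presheaf 2-monad. -/
def Smult (X : QCat Q) : QFun X.Pd.P.Pd.P X.Pd.P := (supP X.Pd).comp (pshb (QCat.yd X.Pd.P))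

/-- `Λ†_X = (y_X^!)^{†!} ∘ y_{P†PPX}`: the flat distributive law of `P† P` over `P`. -/
def LamPdP (X : QCat Q) : QFun X.P.P.Pd X.P.Pd.P :=
  (pshf (cpsf (supP X))).comp (QCat.y X.P.P.Pd)

/-- The multiplication `S†_X = s†_{PX} ∘ (y_{P†PX})^†` of the double copresheaf
2-monad. -/
def Sdmult (X : QCat Q) : QFun X.P.Pd.P.Pd X.P.Pd := (infPd X.P).comp (cpsb (QCat.y X.P.Pd))

/-- Pointwise infimum of a family of `Q`-functors into a presheaf `Q`-category. -/
def QFun.iInfP {ι : Type u} {Z X : QCat Q} (F : ι → QFun Z X.P) : QFun Z X.P where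
  app s z := ⟨fun p x => ⨅ i, ((F i).app s z).1 p x, by
    intro p q x x'
    refine le_iInf fun i => ?_
    exact le_trans
      (Quantaloid.comp_le_comp (iInf_le (fun i => ((F i).app s z).1 q x') i) le_rfl)
      (((F i).app s z).2 p q x x')⟩
  mono := by
    intro s s' z z'
    refine le_iInf fun p => le_iInf fun x => Quantaloid.le_lda.mp ?_
    refine le_iInf fun i => ?_
    have h1 : Q.comp (Z.hom s s' z z') (⨅ j, ((F j).app s z).1 p x)
        ≤ Q.comp (Z.hom s s' z z') (((F i).app s z).1 p x) :=
      Quantaloid.comp_le_comp le_rfl (iInf_le _ i)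
    have h2 : Q.comp (Z.hom s s' z z') (((F i).app s z).1 p x)
        ≤ ((F i).app s' z').1 p x :=
      Quantaloid.le_lda.mpr
        (le_trans ((F i).mono s s' z z') (le_trans (iInf_le _ p) (iInf_le _ x)))
    exact le_trans h1 h2

/-- The distributor `P†X ⇸ X` associated with a `Q`-functor `c : P†X → P†X`,
given by `φ(τ,x) = (c τ)(x)`; for a `Q`-closure operation `c` on `P†X` this realises
the correspondence `c = →φ` of Theorem `PPd_Alg`. -/
def intDist (X : QCat Q) (c : QFun X.Pd X.Pd) : QDist X.Pd X :=
  ⟨fun p q τ x => (c.app p τ).1 q x, by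
    intro p q τ x
    simp only [QRel.comp, Quantaloid.comp_iSup, Quantaloid.iSup_comp]
    refine iSup₂_le fun q' x' => iSup₂_le fun p' τ' => ?_
    have h1 : Q.comp ((c.app p' τ').1 q' x') (X.Pd.hom p p' τ τ')
        ≤ (c.app p τ).1 q' x' :=
      Quantaloid.le_rda.mpr
        (le_trans (c.mono p p' τ τ') (le_trans (iInf_le _ q') (iInf_le _ x')))
    have h2 : Q.comp (X.hom q' q x' x) ((c.app p τ).1 q' x') ≤ (c.app p τ).1 q x :=
      (c.app p τ).2 q' q x' x
    exact le_trans (Quantaloid.comp_le_comp le_rfl h1) h2⟩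

/-- The lax `Λ`-algebra structure `p = φ_⊙ : PP†X → PX` associated with a
`Q`-interior structure `c` on `X`. -/
def intAlg (X : QCat Q) (c : QFun X.Pd X.Pd) : QFun X.Pd.P X.P := (intDist X c).fwdr

/-- Laws (f) and (g) of a lax `Λ`-algebra, for the double presheaf 2-monad `𝔓𝔓†`
with its flat distributive law `Λ` over `𝔓`. -/
def IsAlgPPd (X : QCat Q) (p : QFun X.Pd.P X.P) : Prop :=
  X.y ≤ p.comp ((QCat.y X.Pd).comp X.yd) ∧
  (supP X).comp ((pshf p).comp ((LamPPd X).comp (pshf (cpsf p)))) ≤ p.comp (Smult X)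

/-! ### Auxiliary API for the proof of Statement 11 -/

section Aux

theorem QFun.ext' {X Y : QCat Q} {f g : QFun X Y}
    (h : ∀ p (x : X.el p), f.app p x = g.app p x) : f = g := by
  obtain ⟨fa, fm⟩ := f; obtain ⟨ga, gm⟩ := g
  have h2 : fa = ga := funext fun p => funext fun x => h p x
  subst h2; rfl

namespace Quantaloid

theorem lda_comp_le {a b c : Q.Obj} (w : Q.Hom a c) (u : Q.Hom a b) :
    Q.comp (Quantaloid.lda w u) u ≤ w := Quantaloid.le_lda.mpr le_rfl

end Quantaloid

/-- `comp (P.hom σ σ') (σ x) ≤ σ' x`. -/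
theorem comp_P_hom_le (X : QCat Q) {s s' p : Q.Obj} (σ : X.P.el s) (σ' : X.P.el s')
    (x : X.el p) : Q.comp (X.P.hom s s' σ σ') (σ.1 p x) ≤ σ'.1 p x :=
  Quantaloid.le_lda.mpr ((iInf_le _ p).trans (iInf_le _ x))

theorem le_P_hom (X : QCat Q) {s s' : Q.Obj} {σ : X.P.el s} {σ' : X.P.el s'}
    {v : Q.Hom s s'} (h : ∀ p (x : X.el p), Q.comp v (σ.1 p x) ≤ σ'.1 p x) :
    v ≤ X.P.hom s s' σ σ' :=
  le_iInf fun p => le_iInf fun x => Quantaloid.le_lda.mp (h p x)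

theorem comp_Pd_hom_le (X : QCat Q) {s s' q : Q.Obj} (τ : X.Pd.el s) (τ' : X.Pd.el s')
    (x : X.el q) : Q.comp (τ'.1 q x) (X.Pd.hom s s' τ τ') ≤ τ.1 q x :=
  Quantaloid.le_rda.mpr ((iInf_le _ q).trans (iInf_le _ x))

theorem le_Pd_hom (X : QCat Q) {s s' : Q.Obj} {τ : X.Pd.el s} {τ' : X.Pd.el s'}
    {u : Q.Hom s s'} (h : ∀ q (x : X.el q), Q.comp (τ'.1 q x) u ≤ τ.1 q x) :
    u ≤ X.Pd.hom s s' τ τ' :=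
  le_iInf fun q => le_iInf fun x => Quantaloid.le_rda.mp (h q x)

theorem P_ptwise (X : QCat Q) {s : Q.Obj} {σ σ' : X.P.el s}
    (h : Q.idm s ≤ X.P.hom s s σ σ') : ∀ p (x : X.el p), σ.1 p x ≤ σ'.1 p x := by
  intro p x
  calc σ.1 p x = Q.comp (Q.idm s) (σ.1 p x) := (Q.idm_comp _).symm
    _ ≤ Q.comp (X.P.hom s s σ σ') (σ.1 p x) := Quantaloid.comp_le_comp h le_rfl
    _ ≤ σ'.1 p x := comp_P_hom_le X σ σ' x

theorem idm_le_P_hom (X : QCat Q) {s : Q.Obj} {σ σ' : X.P.el s}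
    (h : ∀ p (x : X.el p), σ.1 p x ≤ σ'.1 p x) : Q.idm s ≤ X.P.hom s s σ σ' :=
  le_P_hom X fun p x => by rw [Q.idm_comp]; exact h p x

theorem Pd_ptwise (X : QCat Q) {s : Q.Obj} {τ τ' : X.Pd.el s}
    (h : Q.idm s ≤ X.Pd.hom s s τ τ') : ∀ q (x : X.el q), τ'.1 q x ≤ τ.1 q x := by
  intro q x
  calc τ'.1 q x = Q.comp (τ'.1 q x) (Q.idm s) := (Q.comp_idm _).symm
    _ ≤ Q.comp (τ'.1 q x) (X.Pd.hom s s τ τ') := Quantaloid.comp_le_comp le_rfl h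
    _ ≤ τ.1 q x := comp_Pd_hom_le X τ τ' x

theorem idm_le_Pd_hom (X : QCat Q) {s : Q.Obj} {τ τ' : X.Pd.el s}
    (h : ∀ q (x : X.el q), τ'.1 q x ≤ τ.1 q x) : Q.idm s ≤ X.Pd.hom s s τ τ' :=
  le_Pd_hom X fun q x => by rw [Q.comp_idm]; exact h q x

/-- Yoneda lemma: `PX.hom (y x) σ = σ x`. -/
theorem yoneda_val (X : QCat Q) {p s : Q.Obj} (x : X.el p) (σ : X.P.el s) :
    X.P.hom p s (X.y.app p x) σ = σ.1 p x := by
  apply le_antisymm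
  · have h : X.P.hom p s (X.y.app p x) σ ≤
        Quantaloid.lda (σ.1 p x) (X.hom p p x x) :=
      (iInf_le _ p).trans (iInf_le _ x)
    calc X.P.hom p s (X.y.app p x) σ
        = Q.comp (X.P.hom p s (X.y.app p x) σ) (Q.idm p) := (Q.comp_idm _).symm
      _ ≤ Q.comp (Quantaloid.lda (σ.1 p x) (X.hom p p x x)) (X.hom p p x x) :=
          Quantaloid.comp_le_comp h (X.refl p x)
      _ ≤ σ.1 p x := Quantaloid.lda_comp_le _ _
  · exact le_iInf fun p' => le_iInf fun x' => Quantaloid.le_lda.mp (σ.2 p' p x' x)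

/-- co-Yoneda lemma: `P†X.hom (τ, y† x) = τ x`. -/
theorem coyoneda_val (X : QCat Q) {s p : Q.Obj} (τ : X.Pd.el s) (x : X.el p) :
    X.Pd.hom s p τ (X.yd.app p x) = τ.1 p x := by
  apply le_antisymm
  · have h : X.Pd.hom s p τ (X.yd.app p x) ≤
        Quantaloid.rda (X.hom p p x x) (τ.1 p x) :=
      (iInf_le _ p).trans (iInf_le _ x)
    calc X.Pd.hom s p τ (X.yd.app p x)
        = Q.comp (Q.idm p) (X.Pd.hom s p τ (X.yd.app p x)) := (Q.idm_comp _).symm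
      _ ≤ Q.comp (X.hom p p x x) (X.Pd.hom s p τ (X.yd.app p x)) :=
          Quantaloid.comp_le_comp (X.refl p x) le_rfl
      _ ≤ τ.1 p x := Quantaloid.le_rda.mpr h
  · exact le_iInf fun q => le_iInf fun x' => Quantaloid.le_rda.mp (τ.2 p q x x')

/-- Value of `f^! = pshb f`: `(f^! σ)(x) = σ(f x)`. -/
theorem pshb_val {X Y : QCat Q} (f : QFun X Y) {s p : Q.Obj} (σ : Y.P.el s)
    (x : X.el p) : ((pshb f).app s σ).1 p x = σ.1 p (f.app p x) := by
  apply le_antisymm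
  · exact iSup_le fun q => iSup_le fun y => σ.2 p q (f.app p x) y
  · calc σ.1 p (f.app p x) = Q.comp (σ.1 p (f.app p x)) (Q.idm p) := (Q.comp_idm _).symm
      _ ≤ Q.comp (σ.1 p (f.app p x)) (Y.hom p p (f.app p x) (f.app p x)) :=
          Quantaloid.comp_le_comp le_rfl (Y.refl p (f.app p x))
      _ ≤ _ := by exact le_iSup_of_le p (le_iSup_of_le (f.app p x) le_rfl)

/-- Value of `f^† = cpsb f`: `(f^† τ)(x) = τ(f x)`. -/
theorem cpsb_val {X Y : QCat Q} (f : QFun X Y) {s q : Q.Obj} (τ : Y.Pd.el s)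
    (x : X.el q) : ((cpsb f).app s τ).1 q x = τ.1 q (f.app q x) := by
  apply le_antisymm
  · exact iSup_le fun p => iSup_le fun y => τ.2 p q y (f.app q x)
  · calc τ.1 q (f.app q x) = Q.comp (Q.idm q) (τ.1 q (f.app q x)) := (Q.idm_comp _).symm
      _ ≤ Q.comp (Y.hom q q (f.app q x) (f.app q x)) (τ.1 q (f.app q x)) :=
          Quantaloid.comp_le_comp (Y.refl q (f.app q x)) le_rfl
      _ ≤ _ := by exact le_iSup_of_le q (le_iSup_of_le (f.app q x) le_rfl)

/-- `f_!` preserves representables: `(f_! (y a))(b) = hom(b, f a)`. -/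
theorem pshf_y_val {X Y : QCat Q} (f : QFun X Y) {s p : Q.Obj} (a : X.el s)
    (b : Y.el p) : ((pshf f).app s (X.y.app s a)).1 p b = Y.hom p s b (f.app s a) := by
  show (⨆ q, ⨆ x : X.el q, Q.comp (X.hom q s x a) (Y.hom p q b (f.app q x)))
      = Y.hom p s b (f.app s a)
  apply le_antisymm
  · refine iSup_le fun q => iSup_le fun x => ?_
    calc Q.comp (X.hom q s x a) (Y.hom p q b (f.app q x))
        ≤ Q.comp (Y.hom q s (f.app q x) (f.app s a)) (Y.hom p q b (f.app q x)) :=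
          Quantaloid.comp_le_comp (f.mono q s x a) le_rfl
      _ ≤ Y.hom p s b (f.app s a) := Y.hom_comp_le _ _ _
  · calc Y.hom p s b (f.app s a)
        = Q.comp (Q.idm s) (Y.hom p s b (f.app s a)) := (Q.idm_comp _).symm
      _ ≤ Q.comp (X.hom s s a a) (Y.hom p s b (f.app s a)) :=
          Quantaloid.comp_le_comp (X.refl s a) le_rfl
      _ ≤ _ := by exact le_iSup_of_le s (le_iSup_of_le a le_rfl)

/-- `f_†` preserves corepresentables: `(f_† (y† a))(b) = hom(f a, b)`. -/
theorem cpsf_yd_val {X Y : QCat Q} (f : QFun X Y) {s q : Q.Obj} (a : X.el s)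
    (b : Y.el q) : ((cpsf f).app s (X.yd.app s a)).1 q b = Y.hom s q (f.app s a) b := by
  show (⨆ p, ⨆ x : X.el p, Q.comp (Y.hom p q (f.app p x) b) (X.hom s p a x))
      = Y.hom s q (f.app s a) b
  apply le_antisymm
  · refine iSup_le fun p => iSup_le fun x => ?_
    calc Q.comp (Y.hom p q (f.app p x) b) (X.hom s p a x)
        ≤ Q.comp (Y.hom p q (f.app p x) b) (Y.hom s p (f.app s a) (f.app p x)) :=
          Quantaloid.comp_le_comp le_rfl (f.mono s p a x)
      _ ≤ Y.hom s q (f.app s a) b := Y.hom_comp_le _ _ _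
  · calc Y.hom s q (f.app s a) b
        = Q.comp (Y.hom s q (f.app s a) b) (Q.idm s) := (Q.comp_idm _).symm
      _ ≤ Q.comp (Y.hom s q (f.app s a) b) (X.hom s s a a) :=
          Quantaloid.comp_le_comp le_rfl (X.refl s a)
      _ ≤ _ := by exact le_iSup_of_le s (le_iSup_of_le a le_rfl)

/-- Monotone maps into a presheaf category act pointwise-monotonically. -/
theorem map_ptwise {Y X : QCat Q} (p : QFun Y.P X.P) {s : Q.Obj} {σ σ' : Y.P.el s}
    (h : ∀ t (y : Y.el t), σ.1 t y ≤ σ'.1 t y) :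
    ∀ q (x : X.el q), (p.app s σ).1 q x ≤ (p.app s σ').1 q x :=
  P_ptwise X ((idm_le_P_hom Y h).trans (p.mono s s σ σ'))

/-! #### Value lemmas (definitional) -/

theorem y_val (X : QCat Q) {p q : Q.Obj} (x : X.el p) (x' : X.el q) :
    (X.y.app p x).1 q x' = X.hom q p x' x := rfl

theorem yd_val (X : QCat Q) {p q : Q.Obj} (x : X.el p) (x' : X.el q) :
    (X.yd.app p x).1 q x' = X.hom p q x x' := rfl

theorem pshf_val {X Y : QCat Q} (f : QFun X Y) {s p : Q.Obj} (σ : X.P.el s)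
    (y : Y.el p) : ((pshf f).app s σ).1 p y
      = ⨆ q, ⨆ x : X.el q, Q.comp (σ.1 q x) (Y.hom p q y (f.app q x)) := rfl

theorem cpsf_val {X Y : QCat Q} (f : QFun X Y) {s q : Q.Obj} (τ : X.Pd.el s)
    (y : Y.el q) : ((cpsf f).app s τ).1 q y
      = ⨆ p, ⨆ x : X.el p, Q.comp (Y.hom p q (f.app p x) y) (τ.1 p x) := rfl

theorem intAlg_val (X : QCat Q) (c : QFun X.Pd X.Pd) {s q : Q.Obj}
    (S : X.Pd.P.el s) (x : X.el q) : ((intAlg X c).app s S).1 q x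
      = ⨅ t, ⨅ τ : X.Pd.el t, Quantaloid.lda (S.1 t τ) ((c.app t τ).1 q x) := rfl

theorem intAlg_le_lda (X : QCat Q) (c : QFun X.Pd X.Pd) {s q t : Q.Obj}
    (S : X.Pd.P.el s) (x : X.el q) (τ : X.Pd.el t) :
    Q.comp (((intAlg X c).app s S).1 q x) ((c.app t τ).1 q x) ≤ S.1 t τ :=
  Quantaloid.le_lda.mpr ((iInf_le _ t).trans (iInf_le _ τ))

/-! #### Canonical constructions -/

/-- The presheaf `τ ↦ (cτ)(x)` on `P†X`. -/
def SigOne (X : QCat Q) (c : QFun X.Pd X.Pd) {q : Q.Obj} (x : X.el q) :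
    X.Pd.P.el q :=
  ⟨fun t τ => (c.app t τ).1 q x, by
    intro t t' τ τ'
    calc Q.comp ((c.app t' τ').1 q x) (X.Pd.hom t t' τ τ')
        ≤ Q.comp ((c.app t' τ').1 q x) (X.Pd.hom t t' (c.app t τ) (c.app t' τ')) :=
          Quantaloid.comp_le_comp le_rfl (c.mono t t' τ τ')
      _ ≤ (c.app t τ).1 q x := comp_Pd_hom_le X _ _ x⟩

/-- The copresheaf `S ↦ (pS)(x)` on `PP†X`. -/
def ThetaP (X : QCat Q) (p : QFun X.Pd.P X.P) {q : Q.Obj} (x : X.el q) :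
    X.Pd.P.Pd.el q :=
  ⟨fun s S => (p.app s S).1 q x, by
    intro s s' S S'
    calc Q.comp (X.Pd.P.hom s s' S S') ((p.app s S).1 q x)
        ≤ Q.comp (X.P.hom s s' (p.app s S) (p.app s' S')) ((p.app s S).1 q x) :=
          Quantaloid.comp_le_comp (p.mono s s' S S') le_rfl
      _ ≤ (p.app s' S').1 q x := comp_P_hom_le X _ _ x⟩

/-- The copresheaf `S ↦ (y_† τ)(pS)` on `PP†X`. -/
def ThetaE (X : QCat Q) (p : QFun X.Pd.P X.P) {t : Q.Obj} (τ : X.Pd.el t) :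
    X.Pd.P.Pd.el t :=
  ⟨fun s S => ((cpsf X.y).app t τ).1 s (p.app s S), by
    intro s s' S S'
    calc Q.comp (X.Pd.P.hom s s' S S') (((cpsf X.y).app t τ).1 s (p.app s S))
        ≤ Q.comp (X.P.hom s s' (p.app s S) (p.app s' S'))
            (((cpsf X.y).app t τ).1 s (p.app s S)) :=
          Quantaloid.comp_le_comp (p.mono s s' S S') le_rfl
      _ ≤ ((cpsf X.y).app t τ).1 s' (p.app s' S') :=
          ((cpsf X.y).app t τ).2 s s' (p.app s S) (p.app s' S')⟩

/-- Value of the canonical closure operation associated with `p`. -/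
def canV (X : QCat Q) (p : QFun X.Pd.P X.P) {t q : Q.Obj} (τ : X.Pd.el t)
    (x : X.el q) : Q.Hom t q :=
  ⨅ s, ⨅ S : X.Pd.P.el s, Quantaloid.rda ((p.app s S).1 q x) (S.1 t τ)

theorem canV_spec (X : QCat Q) (p : QFun X.Pd.P X.P) {t q s : Q.Obj} (τ : X.Pd.el t)
    (x : X.el q) (S : X.Pd.P.el s) :
    Q.comp ((p.app s S).1 q x) (canV X p τ x) ≤ S.1 t τ :=
  Quantaloid.le_rda.mpr ((iInf_le _ s).trans (iInf_le _ S))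

theorem le_canV (X : QCat Q) (p : QFun X.Pd.P X.P) {t q : Q.Obj} {τ : X.Pd.el t}
    {x : X.el q} {u : Q.Hom t q}
    (h : ∀ s (S : X.Pd.P.el s), Q.comp ((p.app s S).1 q x) u ≤ S.1 t τ) :
    u ≤ canV X p τ x :=
  le_iInf fun s => le_iInf fun S => Quantaloid.le_rda.mp (h s S)

/-- The canonical closure operation on `P†X` associated with a lax algebra
structure `p`. -/
def canC (X : QCat Q) (p : QFun X.Pd.P X.P) : QFun X.Pd X.Pd where
  app t τ :=
    ⟨fun q x => canV X p τ x, by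
      intro q q' x x'
      refine le_canV X p fun s S => ?_
      rw [← Q.comp_assoc]
      calc Q.comp (Q.comp ((p.app s S).1 q' x') (X.hom q q' x x')) (canV X p τ x)
          ≤ Q.comp ((p.app s S).1 q x) (canV X p τ x) :=
            Quantaloid.comp_le_comp ((p.app s S).2 q q' x x') le_rfl
        _ ≤ S.1 t τ := canV_spec X p τ x S⟩
  mono := by
    intro t t' τ τ'
    refine le_Pd_hom X fun q x => ?_
    refine le_canV X p fun s S => ?_
    rw [← Q.comp_assoc]
    calc Q.comp (Q.comp ((p.app s S).1 q x) (canV X p τ' x)) (X.Pd.hom t t' τ τ')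
        ≤ Q.comp (S.1 t' τ') (X.Pd.hom t t' τ τ') :=
          Quantaloid.comp_le_comp (canV_spec X p τ' x S) le_rfl
      _ ≤ S.1 t τ := S.2 t t' τ τ'

theorem canC_val (X : QCat Q) (p : QFun X.Pd.P X.P) {t q : Q.Obj} (τ : X.Pd.el t)
    (x : X.el q) : ((canC X p).app t τ).1 q x = canV X p τ x := rfl

/-- The presheaf `Ξ̂` on `P†PP†X` used in the idempotency argument. -/
def XiHat (X : QCat Q) (p : QFun X.Pd.P X.P) {s : Q.Obj} (S : X.Pd.P.el s) :
    X.Pd.P.Pd.P.el s :=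
  ⟨fun r Θ => ⨅ t, ⨅ τ : X.Pd.el t, Quantaloid.lda (S.1 t ((canC X p).app t τ))
      (X.Pd.P.Pd.hom t r ((QCat.yd X.Pd.P).app t ((QCat.y X.Pd).app t τ)) Θ), by
    intro r r' Θ Θ'
    refine le_iInf fun t => le_iInf fun τ => Quantaloid.le_lda.mp ?_
    rw [Q.comp_assoc]
    refine le_trans (Quantaloid.comp_le_comp le_rfl
      (X.Pd.P.Pd.hom_comp_le ((QCat.yd X.Pd.P).app t ((QCat.y X.Pd).app t τ)) Θ Θ')) ?_
    exact Quantaloid.le_lda.mpr ((iInf_le _ t).trans (iInf_le _ τ))⟩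

theorem XiHat_val (X : QCat Q) (p : QFun X.Pd.P X.P) {s r : Q.Obj} (S : X.Pd.P.el s)
    (Θ : X.Pd.P.Pd.el r) : (XiHat X p S).1 r Θ
      = ⨅ t, ⨅ τ : X.Pd.el t, Quantaloid.lda (S.1 t ((canC X p).app t τ))
          (X.Pd.P.Pd.hom t r ((QCat.yd X.Pd.P).app t ((QCat.y X.Pd).app t τ)) Θ) := rfl

/-! #### Reduction of the algebra laws to pointwise form -/

/-- The presheaf `B_Ξ` appearing on the left of law (g). -/
def Bfun (X : QCat Q) (p : QFun X.Pd.P X.P) {s : Q.Obj} (Ξ : X.Pd.P.Pd.P.el s) :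
    X.Pd.P.el s :=
  (pshb (cpsf X.y)).app s ((pshf (cpsf p)).app s Ξ)

/-- The presheaf `D_Ξ = (S_X Ξ)` appearing on the right of law (g). -/
def Dfun (X : QCat Q) {s : Q.Obj} (Ξ : X.Pd.P.Pd.P.el s) : X.Pd.P.el s :=
  (Smult X).app s Ξ

theorem Bfun_val (X : QCat Q) (p : QFun X.Pd.P X.P) {s t : Q.Obj}
    (Ξ : X.Pd.P.Pd.P.el s) (τ : X.Pd.el t) :
    (Bfun X p Ξ).1 t τ = ((pshf (cpsf p)).app s Ξ).1 t ((cpsf X.y).app t τ) :=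
  pshb_val (cpsf X.y) _ τ

theorem Dfun_val (X : QCat Q) {s t : Q.Obj} (Ξ : X.Pd.P.Pd.P.el s) (τ : X.Pd.el t) :
    (Dfun X Ξ).1 t τ
      = Ξ.1 t ((QCat.yd X.Pd.P).app t ((QCat.y X.Pd).app t τ)) := by
  show ((pshb (QCat.y X.Pd)).app s ((pshb (QCat.yd X.Pd.P)).app s Ξ)).1 t τ = _
  rw [pshb_val, pshb_val]

theorem g_lhs_val (X : QCat Q) (p : QFun X.Pd.P X.P) {s q : Q.Obj}
    (Ξ : X.Pd.P.Pd.P.el s) (x : X.el q) :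
    ((((supP X).comp ((pshf p).comp ((LamPPd X).comp (pshf (cpsf p))))).app s Ξ)).1 q x
      = (p.app s (Bfun X p Ξ)).1 q x := by
  show ((supP X).app s
    ((pshf p).app s ((QCat.y X.Pd.P).app s (Bfun X p Ξ)))).1 q x = _
  calc ((supP X).app s ((pshf p).app s ((QCat.y X.Pd.P).app s (Bfun X p Ξ)))).1 q x
      = ((pshf p).app s ((QCat.y X.Pd.P).app s (Bfun X p Ξ))).1 q (X.y.app q x) :=
        pshb_val X.y _ x
    _ = X.P.hom q s (X.y.app q x) (p.app s (Bfun X p Ξ)) := pshf_y_val p _ _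
    _ = (p.app s (Bfun X p Ξ)).1 q x := yoneda_val X x _

/-- Pointwise form of law (g). -/
theorem isAlg_g_iff (X : QCat Q) (p : QFun X.Pd.P X.P) :
    (supP X).comp ((pshf p).comp ((LamPPd X).comp (pshf (cpsf p)))) ≤ p.comp (Smult X)
      ↔ ∀ s (Ξ : X.Pd.P.Pd.P.el s) q (x : X.el q),
          (p.app s (Bfun X p Ξ)).1 q x ≤ (p.app s (Dfun X Ξ)).1 q x := by
  constructor
  · intro h s Ξ q x
    have h2 := P_ptwise X (h s Ξ) q x
    rwa [g_lhs_val X p Ξ x] at h2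
  · intro h s Ξ
    refine idm_le_P_hom X fun q x => ?_
    rw [g_lhs_val X p Ξ x]
    exact h s Ξ q x

/-- Pointwise form of law (f). -/
theorem isAlg_f_iff (X : QCat Q) (p : QFun X.Pd.P X.P) :
    X.y ≤ p.comp ((QCat.y X.Pd).comp X.yd)
      ↔ ∀ q (x : X.el q) p' (x' : X.el p'),
          X.hom p' q x' x
            ≤ (p.app q ((QCat.y X.Pd).app q (X.yd.app q x))).1 p' x' := by
  constructor
  · intro h q x p' x'
    exact P_ptwise X (h q x) p' x'
  · intro h q x
    exact idm_le_P_hom X fun p' x' => h q x p' x'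

/-! #### Part 1: closure operations give lax algebras -/

theorem closure_ptwise (X : QCat Q) {c : QFun X.Pd X.Pd} (hc : IsClosureOp X.Pd c) :
    ∀ t (τ : X.Pd.el t) q (x : X.el q), (c.app t τ).1 q x ≤ τ.1 q x :=
  fun t τ q x => Pd_ptwise X (hc.1 t τ) q x

theorem closure_idem_val (X : QCat Q) {c : QFun X.Pd X.Pd} (hc : IsClosureOp X.Pd c) :
    ∀ t (τ : X.Pd.el t) q (x : X.el q),
      (c.app t (c.app t τ)).1 q x = (c.app t τ).1 q x := by
  intro t τ q x
  have h : (c.comp c).app t τ = c.app t τ := by rw [hc.2]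
  have h2 : c.app t (c.app t τ) = c.app t τ := h
  rw [h2]

theorem part1 (X : QCat Q) (c : QFun X.Pd X.Pd) (hc : IsClosureOp X.Pd c) :
    IsAlgPPd X (intAlg X c) := by
  constructor
  · -- law (f)
    refine (isAlg_f_iff X (intAlg X c)).mpr fun q x p' x' => ?_
    rw [intAlg_val]
    refine le_iInf fun t => le_iInf fun τ => Quantaloid.le_lda.mp ?_
    show Q.comp (X.hom p' q x' x) ((c.app t τ).1 p' x')
      ≤ X.Pd.hom t q τ (X.yd.app q x)
    refine le_Pd_hom X fun r z => ?_
    show Q.comp (X.hom q r x z) (Q.comp (X.hom p' q x' x) ((c.app t τ).1 p' x'))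
      ≤ τ.1 r z
    rw [← Q.comp_assoc]
    calc Q.comp (Q.comp (X.hom q r x z) (X.hom p' q x' x)) ((c.app t τ).1 p' x')
        ≤ Q.comp (X.hom p' r x' z) ((c.app t τ).1 p' x') :=
          Quantaloid.comp_le_comp (X.hom_comp_le x' x z) le_rfl
      _ ≤ (c.app t τ).1 r z := (c.app t τ).2 p' r x' z
      _ ≤ τ.1 r z := closure_ptwise X hc t τ r z
  · -- law (g)
    refine (isAlg_g_iff X (intAlg X c)).mpr fun s Ξ q x => ?_
    set pc := intAlg X c with hpc
    conv_rhs => rw [intAlg_val]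
    refine le_iInf fun t => le_iInf fun τ => Quantaloid.le_lda.mp ?_
    have h1 : Q.comp ((pc.app s (Bfun X pc Ξ)).1 q x) ((c.app t τ).1 q x)
        ≤ (Bfun X pc Ξ).1 t (c.app t τ) := by
      have h0 := intAlg_le_lda X c (Bfun X pc Ξ) x (c.app t τ)
      rwa [closure_idem_val X hc] at h0
    refine le_trans h1 ?_
    rw [Dfun_val, Bfun_val, pshf_val]
    refine iSup_le fun r => iSup_le fun Θ => ?_
    have hkey : X.P.Pd.hom t r ((cpsf X.y).app t (c.app t τ)) ((cpsf pc).app r Θ)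
        ≤ X.Pd.P.Pd.hom t r ((QCat.yd X.Pd.P).app t ((QCat.y X.Pd).app t τ)) Θ := by
      refine le_Pd_hom X.Pd.P fun s'' S => ?_
      show Q.comp (Θ.1 s'' S)
          (X.P.Pd.hom t r ((cpsf X.y).app t (c.app t τ)) ((cpsf pc).app r Θ))
        ≤ ((QCat.yd X.Pd.P).app t ((QCat.y X.Pd).app t τ)).1 s'' S
      have hyd : ((QCat.yd X.Pd.P).app t ((QCat.y X.Pd).app t τ)).1 s'' S
          = S.1 t τ := yoneda_val X.Pd τ S
      rw [hyd]
      have step1 : Θ.1 s'' S ≤ ((cpsf pc).app r Θ).1 s'' (pc.app s'' S) := by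
        rw [cpsf_val]
        calc Θ.1 s'' S = Q.comp (Q.idm s'') (Θ.1 s'' S) := (Q.idm_comp _).symm
          _ ≤ Q.comp (X.P.hom s'' s'' (pc.app s'' S) (pc.app s'' S)) (Θ.1 s'' S) :=
            Quantaloid.comp_le_comp (X.P.refl s'' (pc.app s'' S)) le_rfl
          _ ≤ _ := by exact le_iSup_of_le s'' (le_iSup_of_le S le_rfl)
      have step2 : Q.comp (((cpsf pc).app r Θ).1 s'' (pc.app s'' S))
          (X.P.Pd.hom t r ((cpsf X.y).app t (c.app t τ)) ((cpsf pc).app r Θ))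
          ≤ ((cpsf X.y).app t (c.app t τ)).1 s'' (pc.app s'' S) :=
        comp_Pd_hom_le X.P _ _ _
      have step3 : ((cpsf X.y).app t (c.app t τ)).1 s'' (pc.app s'' S) ≤ S.1 t τ := by
        rw [cpsf_val]
        refine iSup_le fun q' => iSup_le fun x' => ?_
        rw [yoneda_val]
        exact intAlg_le_lda X c S x' τ
      calc Q.comp (Θ.1 s'' S) (X.P.Pd.hom t r ((cpsf X.y).app t (c.app t τ))
            ((cpsf pc).app r Θ))
          ≤ Q.comp (((cpsf pc).app r Θ).1 s'' (pc.app s'' S))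
            (X.P.Pd.hom t r ((cpsf X.y).app t (c.app t τ)) ((cpsf pc).app r Θ)) :=
            Quantaloid.comp_le_comp step1 le_rfl
        _ ≤ ((cpsf X.y).app t (c.app t τ)).1 s'' (pc.app s'' S) := step2
        _ ≤ S.1 t τ := step3
    calc Q.comp (Ξ.1 r Θ) (X.P.Pd.hom t r ((cpsf X.y).app t (c.app t τ))
          ((cpsf pc).app r Θ))
        ≤ Q.comp (Ξ.1 r Θ) (X.Pd.P.Pd.hom t r
            ((QCat.yd X.Pd.P).app t ((QCat.y X.Pd).app t τ)) Θ) :=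
          Quantaloid.comp_le_comp le_rfl hkey
      _ ≤ Ξ.1 t ((QCat.yd X.Pd.P).app t ((QCat.y X.Pd).app t τ)) :=
          Ξ.2 t r ((QCat.yd X.Pd.P).app t ((QCat.y X.Pd).app t τ)) Θ

/-! #### Part 2: lax algebras give closure operations -/

section Part2

variable {X : QCat Q} {p : QFun X.Pd.P X.P}

/-- From law (f): `1 ≤ canC` pointwise. -/
theorem canV_le_val (hp : IsAlgPPd X p) {t q : Q.Obj} (τ : X.Pd.el t) (x : X.el q) :
    canV X p τ x ≤ τ.1 q x := by
  have hf := (isAlg_f_iff X p).mp hp.1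
  have h1 : Q.idm q ≤ (p.app q ((QCat.y X.Pd).app q (X.yd.app q x))).1 q x :=
    le_trans (X.refl q x) (hf q x q x)
  have h2 : Q.comp ((p.app q ((QCat.y X.Pd).app q (X.yd.app q x))).1 q x)
      (canV X p τ x) ≤ X.Pd.hom t q τ (X.yd.app q x) :=
    canV_spec X p τ x ((QCat.y X.Pd).app q (X.yd.app q x))
  have h3 : canV X p τ x ≤ X.Pd.hom t q τ (X.yd.app q x) :=
    calc canV X p τ x = Q.comp (Q.idm q) (canV X p τ x) := (Q.idm_comp _).symm
      _ ≤ Q.comp ((p.app q ((QCat.y X.Pd).app q (X.yd.app q x))).1 q x)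
          (canV X p τ x) := Quantaloid.comp_le_comp h1 le_rfl
      _ ≤ X.Pd.hom t q τ (X.yd.app q x) := h2
  calc canV X p τ x ≤ X.Pd.hom t q τ (X.yd.app q x) := h3
    _ = Q.comp (Q.idm q) (X.Pd.hom t q τ (X.yd.app q x)) := (Q.idm_comp _).symm
    _ ≤ Q.comp ((X.yd.app q x).1 q x) (X.Pd.hom t q τ (X.yd.app q x)) :=
        Quantaloid.comp_le_comp (X.refl q x) le_rfl
    _ ≤ τ.1 q x := comp_Pd_hom_le X τ (X.yd.app q x) x

/-- `D` for the representable `Ξ = y(Θ_x)` is the presheaf `τ ↦ (canC τ)(x)`. -/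
theorem Dfun_theta (q₀ : Q.Obj) (x : X.el q₀) :
    Dfun X ((QCat.y X.Pd.P.Pd).app q₀ (ThetaP X p x)) = SigOne X (canC X p) x := by
  refine Subtype.ext (funext fun t => funext fun τ => ?_)
  rw [Dfun_val]
  show X.Pd.P.Pd.hom t q₀ ((QCat.yd X.Pd.P).app t ((QCat.y X.Pd).app t τ))
      (ThetaP X p x) = canV X p τ x
  show (⨅ s', ⨅ S : X.Pd.P.el s', Quantaloid.rda ((ThetaP X p x).1 s' S)
      (((QCat.yd X.Pd.P).app t ((QCat.y X.Pd).app t τ)).1 s' S)) = canV X p τ x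
  exact iInf_congr fun s' => iInf_congr fun S => by
    rw [show ((QCat.yd X.Pd.P).app t ((QCat.y X.Pd).app t τ)).1 s' S
      = X.Pd.P.hom t s' ((QCat.y X.Pd).app t τ) S from rfl, yoneda_val]; rfl

/-- Key lemma: every point lies in its own "closure" `Σ₁ˣ`. -/
theorem idm_le_p_sigOne (hp : IsAlgPPd X p) {q : Q.Obj} (x : X.el q) :
    Q.idm q ≤ (p.app q (SigOne X (canC X p) x)).1 q x := by
  have hg := (isAlg_g_iff X p).mp hp.2
  have hf := (isAlg_f_iff X p).mp hp.1
  set Ξ := (QCat.y X.Pd.P.Pd).app q (ThetaP X p x) with hΞ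
  -- pointwise `y(y† x) ≤ Bfun Ξ`
  have hYB : ∀ t (τ : X.Pd.el t),
      (((QCat.y X.Pd).app q (X.yd.app q x))).1 t τ ≤ (Bfun X p Ξ).1 t τ := by
    intro t τ
    rw [Bfun_val]
    rw [show ((pshf (cpsf p)).app q Ξ).1 t ((cpsf X.y).app t τ)
      = X.P.Pd.hom t q ((cpsf X.y).app t τ) ((cpsf p).app q (ThetaP X p x)) from
        pshf_y_val (cpsf p) (ThetaP X p x) ((cpsf X.y).app t τ)]
    show X.Pd.hom t q τ (X.yd.app q x) ≤ _
    refine le_Pd_hom X.P fun s' σ => ?_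
    -- `u ≤ τ(x)`
    have hu : X.Pd.hom t q τ (X.yd.app q x) ≤ τ.1 q x :=
      calc X.Pd.hom t q τ (X.yd.app q x)
          = Q.comp (Q.idm q) (X.Pd.hom t q τ (X.yd.app q x)) := (Q.idm_comp _).symm
        _ ≤ Q.comp ((X.yd.app q x).1 q x) (X.Pd.hom t q τ (X.yd.app q x)) :=
            Quantaloid.comp_le_comp (X.refl q x) le_rfl
        _ ≤ τ.1 q x := comp_Pd_hom_le X τ (X.yd.app q x) x
    show Q.comp (((cpsf p).app q (ThetaP X p x)).1 s' σ)
        (X.Pd.hom t q τ (X.yd.app q x)) ≤ ((cpsf X.y).app t τ).1 s' σ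
    rw [cpsf_val, Quantaloid.iSup_comp]
    refine iSup_le fun s'' => ?_
    rw [Quantaloid.iSup_comp]
    refine iSup_le fun S => ?_
    have hterm : Q.comp (X.P.hom s'' s' (p.app s'' S) σ) ((ThetaP X p x).1 s'' S)
        ≤ σ.1 q x := comp_P_hom_le X (p.app s'' S) σ x
    calc Q.comp (Q.comp (X.P.hom s'' s' (p.app s'' S) σ) ((ThetaP X p x).1 s'' S))
          (X.Pd.hom t q τ (X.yd.app q x))
        ≤ Q.comp (σ.1 q x) (τ.1 q x) := Quantaloid.comp_le_comp hterm hu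
      _ ≤ ((cpsf X.y).app t τ).1 s' σ := by
          rw [cpsf_val]
          refine le_trans ?_ (by exact le_iSup_of_le q (le_iSup_of_le x le_rfl))
          rw [yoneda_val]
  have h1 : (p.app q ((QCat.y X.Pd).app q (X.yd.app q x))).1 q x
      ≤ (p.app q (Bfun X p Ξ)).1 q x := map_ptwise p hYB q x
  have h2 : (p.app q (Bfun X p Ξ)).1 q x ≤ (p.app q (Dfun X Ξ)).1 q x := hg q Ξ q x
  have h3 : Dfun X Ξ = SigOne X (canC X p) x := Dfun_theta q x
  calc Q.idm q ≤ X.hom q q x x := X.refl q x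
    _ ≤ (p.app q ((QCat.y X.Pd).app q (X.yd.app q x))).1 q x := hf q x q x
    _ ≤ (p.app q (Bfun X p Ξ)).1 q x := h1
    _ ≤ (p.app q (Dfun X Ξ)).1 q x := h2
    _ = (p.app q (SigOne X (canC X p) x)).1 q x := by rw [h3]

/-- The algebra `p` is recovered from its canonical closure operation. -/
theorem intAlg_canC_val (hp : IsAlgPPd X p) {s q : Q.Obj} (S : X.Pd.P.el s)
    (x : X.el q) : ((intAlg X (canC X p)).app s S).1 q x = (p.app s S).1 q x := by
  apply le_antisymm
  · have hJ : ((intAlg X (canC X p)).app s S).1 q x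
        = X.Pd.P.hom q s (SigOne X (canC X p) x) S := rfl
    rw [hJ]
    calc X.Pd.P.hom q s (SigOne X (canC X p) x) S
        = Q.comp (X.Pd.P.hom q s (SigOne X (canC X p) x) S) (Q.idm q) :=
          (Q.comp_idm _).symm
      _ ≤ Q.comp (X.P.hom q s (p.app q (SigOne X (canC X p) x)) (p.app s S))
          ((p.app q (SigOne X (canC X p) x)).1 q x) :=
          Quantaloid.comp_le_comp (p.mono q s _ S) (idm_le_p_sigOne hp x)
      _ ≤ (p.app s S).1 q x := comp_P_hom_le X _ _ x
  · rw [intAlg_val]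
    exact le_iInf fun t => le_iInf fun τ => Quantaloid.le_lda.mp (canV_spec X p τ x S)

/-- Idempotency of the canonical closure operation. -/
theorem canC_idem_val (hp : IsAlgPPd X p) {t q : Q.Obj} (τ : X.Pd.el t) (x : X.el q) :
    canV X p ((canC X p).app t τ) x = canV X p τ x := by
  have hg := (isAlg_g_iff X p).mp hp.2
  apply le_antisymm
  · exact canV_le_val hp ((canC X p).app t τ) x
  · refine le_canV X p fun s S => ?_
    -- pointwise `S ≤ Bfun (XiHat S)`
    have hSB : ∀ t₀ (τ₀ : X.Pd.el t₀),
        S.1 t₀ τ₀ ≤ (Bfun X p (XiHat X p S)).1 t₀ τ₀ := by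
      intro t₀ τ₀
      have hB1 : S.1 t₀ τ₀ ≤ (XiHat X p S).1 t₀ (ThetaE X p τ₀) := by
        rw [XiHat_val]
        refine le_iInf fun t'' => le_iInf fun τ'' => Quantaloid.le_lda.mp ?_
        have hsub : X.Pd.P.Pd.hom t'' t₀
            ((QCat.yd X.Pd.P).app t'' ((QCat.y X.Pd).app t'' τ'')) (ThetaE X p τ₀)
            ≤ X.Pd.hom t'' t₀ ((canC X p).app t'' τ'') τ₀ := by
          refine le_Pd_hom X fun q' x' => ?_
          show Q.comp (τ₀.1 q' x') _ ≤ canV X p τ'' x'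
          refine le_canV X p fun s'' S'' => ?_
          rw [← Q.comp_assoc]
          have ha : Q.comp ((p.app s'' S'').1 q' x') (τ₀.1 q' x')
              ≤ (ThetaE X p τ₀).1 s'' S'' := by
            show _ ≤ ((cpsf X.y).app t₀ τ₀).1 s'' (p.app s'' S'')
            rw [cpsf_val]
            refine le_trans ?_ (by exact le_iSup_of_le q' (le_iSup_of_le x' le_rfl))
            rw [yoneda_val]
          have hb : Q.comp ((ThetaE X p τ₀).1 s'' S'')
              (X.Pd.P.Pd.hom t'' t₀
                ((QCat.yd X.Pd.P).app t'' ((QCat.y X.Pd).app t'' τ'')) (ThetaE X p τ₀))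
              ≤ ((QCat.yd X.Pd.P).app t'' ((QCat.y X.Pd).app t'' τ'')).1 s'' S'' :=
            comp_Pd_hom_le X.Pd.P _ _ S''
          have hc : ((QCat.yd X.Pd.P).app t'' ((QCat.y X.Pd).app t'' τ'')).1 s'' S''
              = S''.1 t'' τ'' := yoneda_val X.Pd τ'' S''
          calc Q.comp (Q.comp ((p.app s'' S'').1 q' x') (τ₀.1 q' x'))
                (X.Pd.P.Pd.hom t'' t₀
                  ((QCat.yd X.Pd.P).app t'' ((QCat.y X.Pd).app t'' τ'')) (ThetaE X p τ₀))
              ≤ Q.comp ((ThetaE X p τ₀).1 s'' S'')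
                (X.Pd.P.Pd.hom t'' t₀
                  ((QCat.yd X.Pd.P).app t'' ((QCat.y X.Pd).app t'' τ'')) (ThetaE X p τ₀)) :=
                Quantaloid.comp_le_comp ha le_rfl
            _ ≤ S''.1 t'' τ'' := by rw [← hc]; exact hb
        calc Q.comp (S.1 t₀ τ₀) (X.Pd.P.Pd.hom t'' t₀
              ((QCat.yd X.Pd.P).app t'' ((QCat.y X.Pd).app t'' τ'')) (ThetaE X p τ₀))
            ≤ Q.comp (S.1 t₀ τ₀) (X.Pd.hom t'' t₀ ((canC X p).app t'' τ'') τ₀) :=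
              Quantaloid.comp_le_comp le_rfl hsub
          _ ≤ S.1 t'' ((canC X p).app t'' τ'') := S.2 t'' t₀ ((canC X p).app t'' τ'') τ₀
      have hB2 : Q.idm t₀ ≤ X.P.Pd.hom t₀ t₀ ((cpsf X.y).app t₀ τ₀)
          ((cpsf p).app t₀ (ThetaE X p τ₀)) := by
        refine idm_le_Pd_hom X.P fun s' σ => ?_
        rw [cpsf_val]
        refine iSup_le fun s'' => iSup_le fun S'' => ?_
        exact ((cpsf X.y).app t₀ τ₀).2 s'' s' (p.app s'' S'') σ
      rw [Bfun_val, pshf_val]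
      calc S.1 t₀ τ₀ = Q.comp (S.1 t₀ τ₀) (Q.idm t₀) := (Q.comp_idm _).symm
        _ ≤ Q.comp ((XiHat X p S).1 t₀ (ThetaE X p τ₀))
            (X.P.Pd.hom t₀ t₀ ((cpsf X.y).app t₀ τ₀)
              ((cpsf p).app t₀ (ThetaE X p τ₀))) :=
            Quantaloid.comp_le_comp hB1 hB2
        _ ≤ _ := by exact le_iSup_of_le t₀ (le_iSup_of_le (ThetaE X p τ₀) le_rfl)
    have hD : (Dfun X (XiHat X p S)).1 t τ ≤ S.1 t ((canC X p).app t τ) := by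
      rw [Dfun_val, XiHat_val]
      have h0 : (⨅ t', ⨅ τ' : X.Pd.el t',
          Quantaloid.lda (S.1 t' ((canC X p).app t' τ'))
            (X.Pd.P.Pd.hom t' t ((QCat.yd X.Pd.P).app t' ((QCat.y X.Pd).app t' τ'))
              ((QCat.yd X.Pd.P).app t ((QCat.y X.Pd).app t τ))))
          ≤ Quantaloid.lda (S.1 t ((canC X p).app t τ))
            (X.Pd.P.Pd.hom t t ((QCat.yd X.Pd.P).app t ((QCat.y X.Pd).app t τ))
              ((QCat.yd X.Pd.P).app t ((QCat.y X.Pd).app t τ))) :=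
        (iInf_le _ t).trans (iInf_le _ τ)
      refine le_trans ?_ (Quantaloid.le_lda.mpr h0 :
        Q.comp _ (X.Pd.P.Pd.hom t t ((QCat.yd X.Pd.P).app t ((QCat.y X.Pd).app t τ))
          ((QCat.yd X.Pd.P).app t ((QCat.y X.Pd).app t τ))) ≤ _)
      calc (⨅ t', ⨅ τ' : X.Pd.el t', Quantaloid.lda (S.1 t' ((canC X p).app t' τ'))
            (X.Pd.P.Pd.hom t' t ((QCat.yd X.Pd.P).app t' ((QCat.y X.Pd).app t' τ'))
              ((QCat.yd X.Pd.P).app t ((QCat.y X.Pd).app t τ))))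
          = Q.comp (⨅ t', ⨅ τ' : X.Pd.el t',
              Quantaloid.lda (S.1 t' ((canC X p).app t' τ'))
              (X.Pd.P.Pd.hom t' t ((QCat.yd X.Pd.P).app t' ((QCat.y X.Pd).app t' τ'))
                ((QCat.yd X.Pd.P).app t ((QCat.y X.Pd).app t τ)))) (Q.idm t) :=
            (Q.comp_idm _).symm
        _ ≤ Q.comp (⨅ t', ⨅ τ' : X.Pd.el t',
              Quantaloid.lda (S.1 t' ((canC X p).app t' τ'))
              (X.Pd.P.Pd.hom t' t ((QCat.yd X.Pd.P).app t' ((QCat.y X.Pd).app t' τ'))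
                ((QCat.yd X.Pd.P).app t ((QCat.y X.Pd).app t τ))))
            (X.Pd.P.Pd.hom t t ((QCat.yd X.Pd.P).app t ((QCat.y X.Pd).app t τ))
              ((QCat.yd X.Pd.P).app t ((QCat.y X.Pd).app t τ))) :=
            Quantaloid.comp_le_comp le_rfl
              (X.Pd.P.Pd.refl t ((QCat.yd X.Pd.P).app t ((QCat.y X.Pd).app t τ)))
    calc Q.comp ((p.app s S).1 q x) (canV X p τ x)
        ≤ Q.comp ((p.app s (Bfun X p (XiHat X p S))).1 q x) (canV X p τ x) :=
          Quantaloid.comp_le_comp (map_ptwise p hSB q x) le_rfl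
      _ ≤ Q.comp ((p.app s (Dfun X (XiHat X p S))).1 q x) (canV X p τ x) :=
          Quantaloid.comp_le_comp (hg s (XiHat X p S) q x) le_rfl
      _ ≤ (Dfun X (XiHat X p S)).1 t τ := canV_spec X p τ x (Dfun X (XiHat X p S))
      _ ≤ S.1 t ((canC X p).app t τ) := hD

/-- Uniqueness: any `c'` with `intAlg c' = p` has the canonical values. -/
theorem recover_val {c' : QFun X.Pd X.Pd} (h : intAlg X c' = p) {t q : Q.Obj}
    (τ : X.Pd.el t) (x : X.el q) : (c'.app t τ).1 q x = canV X p τ x := by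
  have hval : ∀ s (S : X.Pd.P.el s) q' (x' : X.el q'),
      ((intAlg X c').app s S).1 q' x' = (p.app s S).1 q' x' := by
    intro s S q' x'; rw [h]
  apply le_antisymm
  · refine le_canV X p fun s S => ?_
    rw [← hval s S q x]
    exact intAlg_le_lda X c' S x τ
  · have hid : Q.idm q ≤ (p.app q (SigOne X c' x)).1 q x := by
      rw [← hval q (SigOne X c' x) q x, intAlg_val]
      refine le_iInf fun t' => le_iInf fun τ' => Quantaloid.le_lda.mp ?_
      rw [Q.idm_comp]
      exact le_rfl
    calc canV X p τ x = Q.comp (Q.idm q) (canV X p τ x) := (Q.idm_comp _).symm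
      _ ≤ Q.comp ((p.app q (SigOne X c' x)).1 q x) (canV X p τ x) :=
          Quantaloid.comp_le_comp hid le_rfl
      _ ≤ (SigOne X c' x).1 t τ := canV_spec X p τ x (SigOne X c' x)
      _ = (c'.app t τ).1 q x := rfl

theorem part2 (X : QCat Q) (p : QFun X.Pd.P X.P) (hp : IsAlgPPd X p) :
    ∃! c : QFun X.Pd X.Pd, IsClosureOp X.Pd c ∧ intAlg X c = p := by
  refine ⟨canC X p, ⟨⟨?_, ?_⟩, ?_⟩, ?_⟩
  · -- 1 ≤ canC
    intro t τ
    exact idm_le_Pd_hom X fun q x => canV_le_val hp τ x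
  · -- idempotency
    refine QFun.ext' fun t τ => ?_
    show (canC X p).app t ((canC X p).app t τ) = (canC X p).app t τ
    exact Subtype.ext (funext fun q => funext fun x => canC_idem_val hp τ x)
  · -- intAlg (canC p) = p
    refine QFun.ext' fun s S => ?_
    exact Subtype.ext (funext fun q => funext fun x => intAlg_canC_val hp S x)
  · -- uniqueness
    rintro c' ⟨_, hc'⟩
    refine QFun.ext' fun t τ => ?_
    exact Subtype.ext (funext fun q => funext fun x => recover_val hc' τ x)

end Part2

/-! #### Part 3: lax homomorphisms are continuous maps -/

section Part3

variable {X Y : QCat Q} (c : QFun X.Pd X.Pd) (d : QFun Y.Pd Y.Pd) (f : QFun X Y)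

theorem cont_iff_ptwise :
    c.comp (cpsb f) ≤ (cpsb f).comp d
      ↔ ∀ t (τ : Y.Pd.el t) q (x : X.el q),
          (d.app t τ).1 q (f.app q x) ≤ (c.app t ((cpsb f).app t τ)).1 q x := by
  constructor
  · intro h t τ q x
    have h2 := Pd_ptwise X (h t τ) q x
    have h3 : ((cpsb f).app t (d.app t τ)).1 q x
        ≤ (c.app t ((cpsb f).app t τ)).1 q x := h2
    rwa [cpsb_val] at h3
  · intro h t τ
    refine idm_le_Pd_hom X fun q x => ?_
    show ((cpsb f).app t (d.app t τ)).1 q x ≤ _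
    rw [cpsb_val]
    exact h t τ q x

theorem unit_counit {t : Q.Obj} (τ : Y.Pd.el t) :
    Q.idm t ≤ Y.Pd.hom t t τ ((cpsf f).app t ((cpsb f).app t τ)) := by
  refine idm_le_Pd_hom Y fun q₃ y₃ => ?_
  rw [cpsf_val]
  refine iSup_le fun p₃ => iSup_le fun x₃ => ?_
  rw [cpsb_val]
  exact τ.2 p₃ q₃ (f.app p₃ x₃) y₃

theorem hom_sub (hc : IsClosureOp X.Pd c) {t t' : Q.Obj} (τ : Y.Pd.el t)
    (τ' : X.Pd.el t') :
    Y.Pd.hom t t' τ ((cpsf f).app t' τ') ≤ X.Pd.hom t t' ((cpsb f).app t τ) τ' := by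
  refine le_Pd_hom X fun q' x' => ?_
  show Q.comp (τ'.1 q' x') _ ≤ ((cpsb f).app t τ).1 q' x'
  rw [cpsb_val]
  have ha : τ'.1 q' x' ≤ ((cpsf f).app t' τ').1 q' (f.app q' x') := by
    rw [cpsf_val]
    calc τ'.1 q' x' = Q.comp (Q.idm q') (τ'.1 q' x') := (Q.idm_comp _).symm
      _ ≤ Q.comp (Y.hom q' q' (f.app q' x') (f.app q' x')) (τ'.1 q' x') :=
        Quantaloid.comp_le_comp (Y.refl q' (f.app q' x')) le_rfl
      _ ≤ _ := by exact le_iSup_of_le q' (le_iSup_of_le x' le_rfl)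
  calc Q.comp (τ'.1 q' x') (Y.Pd.hom t t' τ ((cpsf f).app t' τ'))
      ≤ Q.comp (((cpsf f).app t' τ').1 q' (f.app q' x'))
          (Y.Pd.hom t t' τ ((cpsf f).app t' τ')) :=
        Quantaloid.comp_le_comp ha le_rfl
    _ ≤ τ.1 q' (f.app q' x') := comp_Pd_hom_le Y τ ((cpsf f).app t' τ') (f.app q' x')

theorem part3 (hc : IsClosureOp X.Pd c) (hd : IsClosureOp Y.Pd d) :
    (pshf f).comp (intAlg X c) ≤ (intAlg Y d).comp (pshf (cpsf f))
      ↔ c.comp (cpsb f) ≤ (cpsb f).comp d := by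
  rw [cont_iff_ptwise c d f]
  constructor
  · -- lax homomorphism ⇒ continuous
    intro hL t τ q x
    have h1 : Q.idm q ≤ ((intAlg X c).app q (SigOne X c x)).1 q x := by
      rw [intAlg_val]
      refine le_iInf fun t' => le_iInf fun τ' => Quantaloid.le_lda.mp ?_
      rw [Q.idm_comp]
      exact le_rfl
    have h2 : Q.idm q
        ≤ ((pshf f).app q ((intAlg X c).app q (SigOne X c x))).1 q (f.app q x) := by
      rw [pshf_val]
      calc Q.idm q = Q.comp (Q.idm q) (Q.idm q) := (Q.idm_comp _).symm
        _ ≤ Q.comp (((intAlg X c).app q (SigOne X c x)).1 q x)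
            (Y.hom q q (f.app q x) (f.app q x)) :=
          Quantaloid.comp_le_comp h1 (Y.refl q (f.app q x))
        _ ≤ _ := by exact le_iSup_of_le q (le_iSup_of_le x le_rfl)
    have h3 : Q.idm q ≤ ((intAlg Y d).app q
        ((pshf (cpsf f)).app q (SigOne X c x))).1 q (f.app q x) :=
      le_trans h2 (P_ptwise Y (hL q (SigOne X c x)) q (f.app q x))
    have h4 : (d.app t τ).1 q (f.app q x)
        ≤ ((pshf (cpsf f)).app q (SigOne X c x)).1 t τ := by
      rw [intAlg_val] at h3
      have h5 := le_trans h3 ((iInf_le _ t).trans (iInf_le _ τ))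
      have h6 := Quantaloid.le_lda.mpr h5
      rwa [Q.idm_comp] at h6
    refine le_trans h4 ?_
    rw [pshf_val]
    refine iSup_le fun t' => iSup_le fun τ' => ?_
    calc Q.comp ((SigOne X c x).1 t' τ') (Y.Pd.hom t t' τ ((cpsf f).app t' τ'))
        ≤ Q.comp ((c.app t' τ').1 q x) (X.Pd.hom t t' ((cpsb f).app t τ) τ') :=
          Quantaloid.comp_le_comp le_rfl (hom_sub c f hc τ τ')
      _ ≤ Q.comp ((c.app t' τ').1 q x)
          (X.Pd.hom t t' (c.app t ((cpsb f).app t τ)) (c.app t' τ')) :=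
          Quantaloid.comp_le_comp le_rfl (c.mono t t' ((cpsb f).app t τ) τ')
      _ ≤ (c.app t ((cpsb f).app t τ)).1 q x := comp_Pd_hom_le X _ _ x
  · -- continuous ⇒ lax homomorphism
    intro hR s S
    refine idm_le_P_hom Y fun q' y => ?_
    show ((pshf f).app s ((intAlg X c).app s S)).1 q' y
      ≤ ((intAlg Y d).app s ((pshf (cpsf f)).app s S)).1 q' y
    rw [pshf_val]
    conv_rhs => rw [intAlg_val]
    refine iSup_le fun q'' => iSup_le fun x' => le_iInf fun t => le_iInf fun τ =>
      Quantaloid.le_lda.mp ?_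
    rw [Q.comp_assoc]
    have ha : Q.comp (Y.hom q' q'' y (f.app q'' x')) ((d.app t τ).1 q' y)
        ≤ (d.app t τ).1 q'' (f.app q'' x') := (d.app t τ).2 q' q'' y (f.app q'' x')
    have hb : (d.app t τ).1 q'' (f.app q'' x')
        ≤ (c.app t ((cpsb f).app t τ)).1 q'' x' := hR t τ q'' x'
    have hd2 : S.1 t ((cpsb f).app t τ)
        ≤ ((pshf (cpsf f)).app s S).1 t τ := by
      rw [pshf_val]
      calc S.1 t ((cpsb f).app t τ)
          = Q.comp (S.1 t ((cpsb f).app t τ)) (Q.idm t) := (Q.comp_idm _).symm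
        _ ≤ Q.comp (S.1 t ((cpsb f).app t τ))
            (Y.Pd.hom t t τ ((cpsf f).app t ((cpsb f).app t τ))) :=
          Quantaloid.comp_le_comp le_rfl (unit_counit f τ)
        _ ≤ _ := by exact le_iSup_of_le t (le_iSup_of_le ((cpsb f).app t τ) le_rfl)
    calc Q.comp (((intAlg X c).app s S).1 q'' x')
          (Q.comp (Y.hom q' q'' y (f.app q'' x')) ((d.app t τ).1 q' y))
        ≤ Q.comp (((intAlg X c).app s S).1 q'' x')
          ((c.app t ((cpsb f).app t τ)).1 q'' x') :=
          Quantaloid.comp_le_comp le_rfl (ha.trans hb)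
      _ ≤ S.1 t ((cpsb f).app t τ) := intAlg_le_lda X c S x' ((cpsb f).app t τ)
      _ ≤ ((pshf (cpsf f)).app s S).1 t τ := hd2

end Part3

end Aux

/-- for the flat distributive law `Λ` of `𝔓𝔓†` over `𝔓`,
`(Λ,Q)-Alg ≅ Q-Int`: lax `Λ`-algebra structures `p : PP†X → PX` correspond
bijectively to `Q`-closure operations on `P†X` (i.e. `Q`-interior structures), and
lax `Λ`-homomorphisms are exactly the continuous `Q`-functors of `Q`-interior
spaces. -/
theorem statement11 (Q : Quantaloid.{u}) :
    (∀ (X : QCat Q) (c : QFun X.Pd X.Pd), IsClosureOp X.Pd c → IsAlgPPd X (intAlg X c)) ∧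
    (∀ (X : QCat Q) (p : QFun X.Pd.P X.P), IsAlgPPd X p →
      ∃! c : QFun X.Pd X.Pd, IsClosureOp X.Pd c ∧ intAlg X c = p) ∧
    (∀ (X Y : QCat Q) (c : QFun X.Pd X.Pd) (d : QFun Y.Pd Y.Pd) (f : QFun X Y),
      IsClosureOp X.Pd c → IsClosureOp Y.Pd d →
      ((pshf f).comp (intAlg X c) ≤ (intAlg Y d).comp (pshf (cpsf f)) ↔
        c.comp (cpsb f) ≤ (cpsb f).comp d)) :=
  ⟨fun X c hc => part1 X c hc, fun X p hp => part2 X p hp,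
    fun _ _ c d f hc hd => part3 c d f hc hd⟩

end QT
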